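/- arXiv:2510.03945 — 4 statements merged into one kernel-verified Lean document; each statement's English description precedes it below -/
import Mathlib

section
/- Let S be a supercharacter theory of a finite group G and let g ∈ G. Then g is an S-Camina element (i.e., χ(g)=0 for every S-character χ not containing [G,S] in its kernel) if and only if Cl_S(g) = g[G,S], the full coset of g modulo [G,S]. -/
open scoped BigOperators Pointwise

/-- `f : G → ℂ` is an irreducible character of `G`. -/
def IsIrrChar (G : Type) [Group G] [Fintype G] (f : G → ℂ) : Prop :=
  ∃ V : FDRep ℂ G, CategoryTheory.Simple V ∧ V.character = f

/-- A supercharacter theory of a finite group `G` (Diaconis–Isaacs): a partition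
`parts` of the set of irreducible characters of `G` together with a partition of `G`
into `S`-classes (`cls g` is the class of `g`), such that `{1}` is a class, the number
of parts equals the number of classes, and each supercharacter
`σ_X = ∑ χ ∈ X, χ(1)·χ` is constant on every class. -/
structure SCT (G : Type) [Group G] [Fintype G] where
  parts : Finset (Finset (G → ℂ))
  cls : G → Set G
  parts_cover : ∀ f : G → ℂ, IsIrrChar G f ↔ ∃ X ∈ parts, f ∈ X
  parts_disj : ∀ X ∈ parts, ∀ Y ∈ parts, X ≠ Y → Disjoint X Y
  parts_nonempty : ∀ X ∈ parts, X.Nonempty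
  mem_cls : ∀ g : G, g ∈ cls g
  cls_eq : ∀ g h : G, h ∈ cls g → cls h = cls g
  cls_one : cls (1 : G) = {1}
  card_eq : parts.card = Nat.card (Set.range cls)
  const : ∀ X ∈ parts, ∀ g h : G, h ∈ cls g →
    (∑ χ ∈ X, χ 1 * χ h) = (∑ χ ∈ X, χ 1 * χ g)

variable {G : Type} [Group G] [Fintype G]

namespace SCT

/-- The supercharacter attached to a part `X`. -/
noncomputable def superchar (_S : SCT G) (X : Finset (G → ℂ)) : G → ℂ := fun g => ∑ χ ∈ X, χ 1 * χ g

/-- The set `Irr(S)` of `S`-characters. -/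
def Irr (S : SCT G) : Set (G → ℂ) := {f | ∃ X ∈ S.parts, f = S.superchar X}

end SCT

/-- The kernel of a character-like function `f : G → ℂ`. -/
def charKer (f : G → ℂ) : Subgroup G where
  carrier := {g | ∀ h, f (g * h) = f h}
  one_mem' := by intro h; simp
  mul_mem' := by intro a b ha hb h; rw [mul_assoc, ha, hb]
  inv_mem' := by
    intro a ha h
    have := ha (a⁻¹ * h)
    rw [mul_inv_cancel_left] at this
    exact this.symm

namespace SCT

/-- `[H,S]`, the subgroup generated by the `g⁻¹k` with `g ∈ H`, `k ∈ Cl_S(g)`. -/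
def comm (S : SCT G) (H : Subgroup G) : Subgroup G :=
  Subgroup.closure {x | ∃ g ∈ H, ∃ k ∈ S.cls g, x = g⁻¹ * k}

/-- `[G,S]`. -/
def derived (S : SCT G) : Subgroup G := S.comm ⊤

/-- `Irr(S | N)`: the `S`-characters whose kernel does not contain `N`. -/
def IrrRel (S : SCT G) (N : Subgroup G) : Set (G → ℂ) :=
  {f | f ∈ S.Irr ∧ ¬ N ≤ charKer f}

/-- `g` is an `S`-Camina element: all of `Irr(S | [G,S])` vanishes at `g`. -/
def IsCaminaElt (S : SCT G) (g : G) : Prop :=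
  ∀ f ∈ S.IrrRel S.derived, f g = 0

/-- `N` is `S`-normal: a union of `S`-classes. -/
def IsNormal (S : SCT G) (N : Subgroup G) : Prop :=
  ∀ g ∈ N, S.cls g ⊆ N

/-- `(G,N)` is a generalised `S`-Camina pair. -/
def IsGCP (S : SCT G) (N : Subgroup G) : Prop :=
  S.IsNormal N ∧ ∀ g : G, g ∉ N → S.IsCaminaElt g

/-- The set `Z(S)` of elements with singleton `S`-class. -/
def centerSet (S : SCT G) : Set G := {g | S.cls g = {g}}

/-- The vanishing-off subgroup `V(S | N)`. -/
def V (S : SCT G) (N : Subgroup G) : Subgroup G :=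
  Subgroup.closure {g | ∃ f ∈ S.IrrRel N, f g ≠ 0}

/-- `V(S) = V(S | [G,S])`. -/
def VS (S : SCT G) : Subgroup G := S.V S.derived

/-- `U(S | N)`: the product of all `S`-normal subgroups `H` with `V(S | H) ≤ N`. -/
def U (S : SCT G) (N : Subgroup G) : Subgroup G :=
  ⨆ (H : Subgroup G) (_ : S.IsNormal H ∧ S.V H ≤ N), H

/-- The upper `S`-central series: `ζ_0 = 1` and `ζ_{i+1}/ζ_i = Z(S^{G/ζ_i})`,
i.e. `ζ_{i+1}` consists of the `g` whose `S`-class maps onto the single coset `gζ_i`. -/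
def zeta (S : SCT G) : ℕ → Subgroup G
  | 0 => ⊥
  | i + 1 => Subgroup.closure {g | ∀ k ∈ S.cls g, g⁻¹ * k ∈ S.zeta i}

/-- The lower `S`-central series `γ_1 = G`, `γ_{i+1} = [γ_i, S]` (with `γ_0 := G`). -/
def gamma (S : SCT G) : ℕ → Subgroup G
  | 0 => ⊤
  | 1 => ⊤
  | n + 2 => S.comm (S.gamma (n + 1))

/-- The series `V_1(S) = V(S)`, `V_{i+1}(S) = [V_i(S), S]` (with `V_0 := V(S)`). -/
def Vseq (S : SCT G) : ℕ → Subgroup G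
  | 0 => S.VS
  | 1 => S.VS
  | n + 2 => S.comm (S.Vseq (n + 1))

/-- `G` is a `VZ(S)`-group: every member of `Irr(S | [G,S])` vanishes off `Z(S)`. -/
def IsVZ (S : SCT G) : Prop :=
  ∀ f ∈ S.IrrRel S.derived, ∀ g : G, g ∉ S.centerSet → f g = 0

end SCT


/-! ### Auxiliary machinery for the proof -/

open CategoryTheory Module
open scoped Classical

namespace CaminaAux

variable {G : Type} [Group G] [Fintype G]

theorem orth_raw (V W : FDRep ℂ G) [Simple V] [Simple W] :
    ∑ g : G, V.character g * W.character g⁻¹ =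
      if Nonempty (V ≅ W) then (Fintype.card G : ℂ) else 0 := by
  have hne : ((Nat.card G : ℕ) : ℂ) ≠ 0 := Nat.cast_ne_zero.mpr Nat.card_pos.ne'
  have h := FDRep.char_orthonormal (k := ℂ) (G := G) V W
  have h' := congrArg (fun z : ℂ => ((Nat.card G : ℕ) : ℂ) * z) h
  simp only [smul_eq_mul, ← mul_assoc, mul_inv_cancel₀ hne, one_mul, mul_ite, mul_one, mul_zero,
    Nat.cast_one, Nat.cast_zero] at h'
  rw [Nat.card_eq_fintype_card] at h'
  exact h'

theorem orth {f f' : G → ℂ} (hf : IsIrrChar G f) (hf' : IsIrrChar G f') :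
    ∑ x : G, f x * f' x⁻¹ = if f = f' then (Fintype.card G : ℂ) else 0 := by
  obtain ⟨V, hV, rfl⟩ := hf
  obtain ⟨W, hW, rfl⟩ := hf'
  haveI := hV; haveI := hW
  by_cases h : V.character = W.character
  · rw [if_pos h, h]
    have := orth_raw W W
    rwa [if_pos ⟨Iso.refl W⟩] at this
  · rw [if_neg h]
    have := orth_raw V W
    rwa [if_neg (fun ⟨i⟩ => h (FDRep.char_iso i))] at this

theorem irrchar_mul_comm {f : G → ℂ} (hf : IsIrrChar G f) (a b : G) : f (a * b) = f (b * a) := by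
  obtain ⟨V, hV, rfl⟩ := hf; exact FDRep.char_mul_comm V b a

theorem irrchar_conj {f : G → ℂ} (hf : IsIrrChar G f) (t x : G) : f (t * x * t⁻¹) = f x := by
  rw [irrchar_mul_comm hf (t * x) t⁻¹, inv_mul_cancel_left]

theorem irrchar_one {f : G → ℂ} (hf : IsIrrChar G f) : ∃ n : ℕ, 0 < n ∧ f 1 = n := by
  obtain ⟨V, hV, rfl⟩ := hf
  haveI := hV
  refine ⟨finrank ℂ V, ?_, by simp⟩
  rcases Nat.eq_zero_or_pos (finrank ℂ V) with h | h
  · exfalso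
    haveI : Subsingleton V := (Module.finrank_zero_iff (R := ℂ) (M := V)).mp h
    have hid : 𝟙 V = 0 := by
      apply Action.hom_ext
      apply FGModuleCat.hom_ext
      apply LinearMap.ext
      intro v
      exact Subsingleton.elim (α := V) _ _
    exact CategoryTheory.id_nonzero V hid
  · exact h

theorem irrchar_one_ne_zero {f : G → ℂ} (hf : IsIrrChar G f) : f 1 ≠ 0 := by
  obtain ⟨n, hn, he⟩ := irrchar_one hf
  rw [he]; exact_mod_cast hn.ne'

theorem dich (D : Subgroup G) [D.Normal] (V : FDRep ℂ G) [Simple V] :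
    (∀ d ∈ D, ∀ h : G, V.character (d * h) = V.character h) ∨
    (∀ h : G, ∑ d : D, V.character (h * d) = 0) := by
  set E : V →ₗ[ℂ] V := ∑ d : D, V.ρ (d : G) with hE
  have habs : ∀ d₀ : D, E * V.ρ (d₀ : G) = E := by
    intro d₀
    rw [hE, Finset.sum_mul]
    have : ∀ d : D, V.ρ (d : G) * V.ρ (d₀ : G) = V.ρ ((d * d₀ : D) : G) := fun d => by
      rw [← map_mul]; rfl
    rw [Finset.sum_congr rfl (fun d _ => this d)]
    exact Fintype.sum_equiv (Equiv.mulRight d₀) _ _ (fun d => rfl)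
  have hcomm : ∀ g : G, E ∘ₗ V.ρ g = V.ρ g ∘ₗ E := by
    intro g
    have h1 : V.ρ g * E = ∑ d : D, V.ρ (g * (d : G)) := by
      rw [hE, Finset.mul_sum]
      exact Finset.sum_congr rfl fun d _ => by rw [← map_mul]
    have h2 : E * V.ρ g = ∑ d : D, V.ρ ((d : G) * g) := by
      rw [hE, Finset.sum_mul]
      exact Finset.sum_congr rfl fun d _ => by rw [← map_mul]
    have h3 : E * V.ρ g = V.ρ g * E := by
      rw [h1, h2]
      refine Fintype.sum_equiv (MulAut.conjNormal g).symm.toEquiv _ _ (fun d => ?_)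
      have hval : (((MulAut.conjNormal g).symm.toEquiv d : ↥D) : G) = g⁻¹ * (d : G) * g :=
        MulAut.conjNormal_symm_apply g d
      rw [hval]
      congr 1
      group
    exact h3
  let φ : V ⟶ V := ⟨InducedCategory.homMk (ModuleCat.ofHom E), fun g => FGModuleCat.hom_ext (hcomm g)⟩
  obtain ⟨c, hc⟩ := CategoryTheory.endomorphism_simple_eq_smul_id ℂ φ
  have hcE : E = c • LinearMap.id := by
    have h4 : (φ.hom.hom.hom : V →ₗ[ℂ] V) = ((c • 𝟙 V : V ⟶ V).hom.hom.hom : V →ₗ[ℂ] V) := by rw [hc]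
    exact h4.trans rfl
  by_cases hcz : c = 0
  · right
    intro h
    have hE0 : E = 0 := by rw [hcE, hcz, zero_smul]
    have h5 : ∑ d : D, V.character (h * (d : G)) =
        LinearMap.trace ℂ V (V.ρ h * E) := by
      rw [hE, Finset.mul_sum, map_sum]
      exact Finset.sum_congr rfl fun d _ => by
        rw [FDRep.character, map_mul]
    rw [h5, hE0, mul_zero, map_zero]
  · left
    intro d hd h
    have hrho : V.ρ d = LinearMap.id := by
      have h1 := habs ⟨d, hd⟩
      rw [hcE] at h1
      have h2 : c • (V.ρ d) = c • (LinearMap.id : V →ₗ[ℂ] V) := by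
        rw [← h1]
        ext v
        simp
      exact smul_right_injective _ hcz h2
    rw [FDRep.character, map_mul, hrho]
    have h6 : (LinearMap.id : V →ₗ[ℂ] V) * V.ρ h = V.ρ h := one_mul _
    rw [h6]
    rfl

end CaminaAux

namespace CaminaAux

variable {G : Type} [Group G] [Fintype G] (S : SCT G)

/-- The finset of all irreducible characters. -/
noncomputable def U : Finset (G → ℂ) := S.parts.biUnion id

theorem mem_U_irr {f : G → ℂ} (hf : f ∈ U S) : IsIrrChar G f := by
  rw [S.parts_cover]
  obtain ⟨X, hX, hfX⟩ := Finset.mem_biUnion.mp hf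
  exact ⟨X, hX, hfX⟩

theorem part_subset_U {X : Finset (G → ℂ)} (hX : X ∈ S.parts) : X ⊆ U S := fun f hf =>
  Finset.mem_biUnion.mpr ⟨X, hX, hf⟩

/-- Linear independence of irreducible characters, in coefficient form. -/
theorem ind (b : (G → ℂ) → ℂ) (h : ∀ x : G, ∑ f ∈ U S, b f * f x = 0) :
    ∀ f₀ ∈ U S, b f₀ = 0 := by
  intro f₀ hf₀
  have hcard : (Fintype.card G : ℂ) ≠ 0 := Nat.cast_ne_zero.mpr Fintype.card_ne_zero
  have h1 : ∑ x : G, (∑ f ∈ U S, b f * f x) * f₀ x⁻¹ = 0 := by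
    simp only [h, zero_mul, Finset.sum_const_zero]
  have h2 : ∑ x : G, (∑ f ∈ U S, b f * f x) * f₀ x⁻¹
      = ∑ f ∈ U S, b f * ∑ x : G, f x * f₀ x⁻¹ := by
    calc ∑ x : G, (∑ f ∈ U S, b f * f x) * f₀ x⁻¹
        = ∑ x : G, ∑ f ∈ U S, b f * f x * f₀ x⁻¹ :=
          Finset.sum_congr rfl fun x _ => Finset.sum_mul _ _ _
      _ = ∑ f ∈ U S, ∑ x : G, b f * f x * f₀ x⁻¹ := Finset.sum_comm
      _ = ∑ f ∈ U S, b f * ∑ x : G, f x * f₀ x⁻¹ := by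
          refine Finset.sum_congr rfl fun f _ => ?_
          rw [Finset.mul_sum]
          exact Finset.sum_congr rfl fun x _ => by ring
  have h3 : ∑ f ∈ U S, b f * ∑ x : G, f x * f₀ x⁻¹ = b f₀ * (Fintype.card G : ℂ) := by
    rw [Finset.sum_eq_single f₀]
    · rw [orth (mem_U_irr S hf₀) (mem_U_irr S hf₀), if_pos rfl]
    · intro f hf hne
      rw [orth (mem_U_irr S hf) (mem_U_irr S hf₀), if_neg hne, mul_zero]
    · intro hne; exact absurd hf₀ hne
  have h4 : b f₀ * (Fintype.card G : ℂ) = 0 := by rw [← h3, ← h2, h1]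
  exact (mul_eq_zero.mp h4).resolve_right hcard

/-- The space of superclass functions. -/
noncomputable def Vcf : Submodule ℂ (G → ℂ) where
  carrier := {φ | ∀ a b : G, b ∈ S.cls a → φ b = φ a}
  add_mem' := fun hφ hψ a b hab => by simp [hφ a b hab, hψ a b hab]
  zero_mem' := fun a b _ => rfl
  smul_mem' := fun c φ hφ a b hab => by simp [hφ a b hab]

/-- The supercharacters, as a family indexed by parts. -/
noncomputable def v : {X // X ∈ S.parts} → (G → ℂ) := fun X => S.superchar X.1

theorem v_mem_Vcf (X : {X // X ∈ S.parts}) : v S X ∈ Vcf S := fun a b hab =>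
  S.const X.1 X.2 a b hab

theorem span_le_Vcf : Submodule.span ℂ (Set.range (v S)) ≤ Vcf S :=
  Submodule.span_le.mpr (Set.range_subset_iff.mpr (v_mem_Vcf S))

/-- The coefficient of an irreducible character extracted from coefficients on parts. -/
noncomputable def coefAt (c : {X // X ∈ S.parts} → ℂ) (f : G → ℂ) : ℂ :=
  ∑ X ∈ S.parts.attach, if f ∈ X.1 then c X else 0

theorem coefAt_eq {X : Finset (G → ℂ)} (hX : X ∈ S.parts) {f : G → ℂ} (hf : f ∈ X)
    (c : {X // X ∈ S.parts} → ℂ) : coefAt S c f = c ⟨X, hX⟩ := by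
  rw [coefAt, Finset.sum_eq_single (⟨X, hX⟩ : {X // X ∈ S.parts})]
  · rw [if_pos hf]
  · intro Y _ hne
    refine if_neg (fun hfY => ?_)
    have hd := S.parts_disj Y.1 Y.2 X hX (fun he => hne (Subtype.ext he))
    exact (Finset.disjoint_left.mp hd) hfY hf
  · intro hne; exact absurd (Finset.mem_attach _ _) hne

theorem sum_over_part {X : Finset (G → ℂ)} (hX : X ∈ S.parts) (t : (G → ℂ) → ℂ) :
    ∑ f ∈ U S, (if f ∈ X then t f else 0) = ∑ f ∈ X, t f := by
  rw [← Finset.sum_subset (part_subset_U S hX) (fun f _ hfX => if_neg hfX)]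
  exact Finset.sum_congr rfl fun f hf => if_pos hf

theorem sum_U_eq (c : {X // X ∈ S.parts} → ℂ) (x : G) :
    ∑ f ∈ U S, (coefAt S c f * f 1) * f x
      = ∑ X ∈ S.parts.attach, c X * S.superchar X.1 x := by
  have h1 : ∀ f : G → ℂ, (coefAt S c f * f 1) * f x
      = ∑ X ∈ S.parts.attach, (if f ∈ X.1 then c X * (f 1 * f x) else 0) := by
    intro f
    rw [coefAt, Finset.sum_mul, Finset.sum_mul]
    refine Finset.sum_congr rfl fun X _ => ?_
    split <;> ring
  calc ∑ f ∈ U S, (coefAt S c f * f 1) * f x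
      = ∑ f ∈ U S, ∑ X ∈ S.parts.attach, (if f ∈ X.1 then c X * (f 1 * f x) else 0) :=
        Finset.sum_congr rfl fun f _ => h1 f
    _ = ∑ X ∈ S.parts.attach, ∑ f ∈ U S, (if f ∈ X.1 then c X * (f 1 * f x) else 0) :=
        Finset.sum_comm
    _ = ∑ X ∈ S.parts.attach, c X * S.superchar X.1 x := by
        refine Finset.sum_congr rfl fun X _ => ?_
        rw [sum_over_part S X.2]
        show ∑ f ∈ X.1, c X * (f 1 * f x) = c X * S.superchar X.1 x
        rw [show S.superchar X.1 x = ∑ f ∈ X.1, f 1 * f x from rfl, Finset.mul_sum]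

theorem lin_indep : LinearIndependent ℂ (v S) := by
  rw [Fintype.linearIndependent_iff]
  intro c hc X
  have hc' : ∀ x : G, ∑ f ∈ U S, (coefAt S c f * f 1) * f x = 0 := by
    intro x
    rw [sum_U_eq S c x]
    have := congrFun hc x
    simpa [Finset.univ_eq_attach, Finset.sum_apply, v] using this
  obtain ⟨f, hf⟩ := S.parts_nonempty X.1 X.2
  have h0 := ind S _ hc' f (part_subset_U S X.2 hf)
  rw [coefAt_eq S X.2 hf] at h0
  rcases mul_eq_zero.mp h0 with h | h
  · exact h
  · exact absurd h (irrchar_one_ne_zero (mem_U_irr S (part_subset_U S X.2 hf)))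

end CaminaAux

namespace CaminaAux

variable {G : Type} [Group G] [Fintype G] (S : SCT G)

theorem vcf_eq_span : Vcf S = Submodule.span ℂ (Set.range (v S)) := by
  symm
  apply Submodule.eq_of_le_of_finrank_le (span_le_Vcf S)
  -- finrank of Vcf is at most the number of superclasses
  have hinj : Function.Injective
      (fun (φ : Vcf S) => (fun r : Set.range S.cls => φ.1 r.2.choose)) := by
    intro φ ψ hφψ
    ext1
    funext x
    have h1 : S.cls x ∈ Set.range S.cls := ⟨x, rfl⟩
    have h2 := congrFun hφψ ⟨S.cls x, h1⟩
    simp only at h2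
    have hc : S.cls (h1.choose) = S.cls x := h1.choose_spec
    have hx : x ∈ S.cls h1.choose := by rw [hc]; exact S.mem_cls x
    have e1 : φ.1 x = φ.1 h1.choose := φ.2 h1.choose x hx
    have e2 : ψ.1 x = ψ.1 h1.choose := ψ.2 h1.choose x hx
    rw [e1, e2]
    exact h2
  have hlin : IsLinearMap ℂ (fun (φ : Vcf S) => (fun r : Set.range S.cls => φ.1 r.2.choose)) :=
    ⟨fun φ ψ => rfl, fun c φ => rfl⟩
  letI : Fintype (Set.range S.cls) := Fintype.ofFinite _
  have hle : finrank ℂ (Vcf S) ≤ finrank ℂ ((Set.range S.cls) → ℂ) :=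
    LinearMap.finrank_le_finrank_of_injective (f := hlin.mk') hinj
  have hVcf : finrank ℂ (Vcf S) ≤ Nat.card (Set.range S.cls) := by
    rwa [Module.finrank_pi, ← Nat.card_eq_fintype_card] at hle
  have hspan : finrank ℂ (Submodule.span ℂ (Set.range (v S))) = S.parts.card := by
    rw [finrank_span_eq_card (lin_indep S), Fintype.card_coe]
  rw [hspan, S.card_eq]
  exact hVcf

theorem mem_span_coeff {φ : G → ℂ} (hφ : φ ∈ Vcf S) :
    ∃ c : {X // X ∈ S.parts} → ℂ,
      ∀ x : G, ∑ X ∈ S.parts.attach, c X * S.superchar X.1 x = φ x := by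
  rw [vcf_eq_span S] at hφ
  obtain ⟨c, hc⟩ := (Submodule.mem_span_range_iff_exists_fun ℂ).mp hφ
  refine ⟨c, fun x => ?_⟩
  have := congrFun hc x
  simpa [Finset.univ_eq_attach, Finset.sum_apply, v] using this

theorem vcf_conj {φ : G → ℂ} (hφ : φ ∈ Vcf S) (t x : G) : φ (t * x * t⁻¹) = φ x := by
  obtain ⟨c, hc⟩ := mem_span_coeff S hφ
  rw [← hc (t * x * t⁻¹), ← hc x]
  refine Finset.sum_congr rfl fun X _ => ?_
  congr 1
  show ∑ f ∈ X.1, f 1 * f (t * x * t⁻¹) = ∑ f ∈ X.1, f 1 * f x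
  refine Finset.sum_congr rfl fun f hf => ?_
  rw [irrchar_conj (mem_U_irr S (part_subset_U S X.2 hf)) t x]

theorem indicator_mem_Vcf (t : G) :
    (fun x => if x ∈ S.cls t then (1 : ℂ) else 0) ∈ Vcf S := by
  intro a b hab
  show (if b ∈ S.cls t then (1 : ℂ) else 0) = (if a ∈ S.cls t then (1 : ℂ) else 0)
  by_cases ha : a ∈ S.cls t
  · have : S.cls a = S.cls t := S.cls_eq t a ha
    have hb : b ∈ S.cls t := this ▸ hab
    rw [if_pos ha, if_pos hb]
  · have hb : b ∉ S.cls t := by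
      intro hb
      have h1 : S.cls b = S.cls t := S.cls_eq t b hb
      have h2 : S.cls b = S.cls a := S.cls_eq a b hab
      apply ha
      rw [← h1, h2]
      exact S.mem_cls a
    rw [if_neg ha, if_neg hb]

theorem cls_conj {t k : G} (hk : k ∈ S.cls t) (x : G) : x * k * x⁻¹ ∈ S.cls t := by
  have h := vcf_conj S (indicator_mem_Vcf S t) x k
  simp only [if_pos hk] at h
  by_contra hc
  rw [if_neg hc] at h
  exact one_ne_zero h.symm

theorem derived_normal : (S.derived).Normal := by
  constructor
  intro n hn t
  rw [SCT.derived, SCT.comm] at hn ⊢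
  induction hn using Subgroup.closure_induction with
  | mem x hx =>
      obtain ⟨a, _, k, hk, rfl⟩ := hx
      apply Subgroup.subset_closure
      refine ⟨t * a * t⁻¹, trivial, t * k * t⁻¹, ?_, ?_⟩
      · have h1 : t * a * t⁻¹ ∈ S.cls a := cls_conj S (S.mem_cls a) t
        have h2 : S.cls (t * a * t⁻¹) = S.cls a := S.cls_eq a _ h1
        rw [h2]
        exact cls_conj S hk t
      · group
  | one => simpa using Subgroup.one_mem _
  | mul x y _ _ hx hy =>
      have : t * (x * y) * t⁻¹ = (t * x * t⁻¹) * (t * y * t⁻¹) := by group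
      rw [this]
      exact Subgroup.mul_mem _ hx hy
  | inv x _ hx =>
      have : t * x⁻¹ * t⁻¹ = (t * x * t⁻¹)⁻¹ := by group
      rw [this]
      exact Subgroup.inv_mem _ hx

theorem cls_subset_coset (h : G) : S.cls h ⊆ h • (S.derived : Set G) := by
  intro k hk
  refine ⟨h⁻¹ * k, ?_, by simp⟩
  exact Subgroup.subset_closure ⟨h, trivial, k, hk, rfl⟩

theorem mem_derived_of_cls {h k : G} (hk : k ∈ S.cls h) : h⁻¹ * k ∈ S.derived :=
  Subgroup.subset_closure ⟨h, trivial, k, hk, rfl⟩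

end CaminaAux

namespace CaminaAux

variable {G : Type} [Group G] [Fintype G] (S : SCT G)

/-- The property `D ≤ ker f` for the derived subgroup. -/
def P (f : G → ℂ) : Prop := ∀ d ∈ S.derived, ∀ h : G, f (d * h) = f h

theorem f_dich {f : G → ℂ} (hf : IsIrrChar G f) :
    P S f ∨ (∀ h : G, ∑ d : S.derived, f (h * d) = 0) := by
  haveI := derived_normal S
  obtain ⟨V, hV, rfl⟩ := hf
  haveI := hV
  exact dich S.derived V

theorem sum_of_P {f : G → ℂ} (hf : IsIrrChar G f) (hP : P S f) (h : G) :
    ∑ d : S.derived, f (h * d) = (Fintype.card S.derived : ℂ) * f h := by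
  have : ∀ d : S.derived, f (h * d) = f h := fun d => by
    rw [irrchar_mul_comm hf h d, hP d d.2 h]
  rw [Finset.sum_congr rfl (fun d _ => this d), Finset.sum_const, Finset.card_univ,
    nsmul_eq_mul]

theorem sum_of_notP {f : G → ℂ} (hf : IsIrrChar G f) (hP : ¬ P S f) (h : G) :
    ∑ d : S.derived, f (h * d) = 0 := ((f_dich S hf).resolve_left hP) h

/-- All-or-nothing: within a part, either all characters contain `[G,S]` in their kernel
or none do. -/
theorem allnot {X : Finset (G → ℂ)} (hX : X ∈ S.parts) {f₀ f₁ : G → ℂ}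
    (h₀ : f₀ ∈ X) (h₁ : f₁ ∈ X) (hP₀ : P S f₀) : P S f₁ := by
  by_contra hP₁
  haveI := derived_normal S
  set D := S.derived
  have hcD : (Fintype.card D : ℂ) ≠ 0 := Nat.cast_ne_zero.mpr Fintype.card_ne_zero
  -- the D-average of the supercharacter of X
  set σ' : G → ℂ := fun x => ∑ f ∈ X.filter (P S), f 1 * f x with hσ'
  have hTσ : ∀ x : G, ∑ d : D, S.superchar X (x * d) = (Fintype.card D : ℂ) * σ' x := by
    intro x
    have h1 : ∑ d : D, S.superchar X (x * d)
        = ∑ f ∈ X, f 1 * ∑ d : D, f (x * d) := by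
      calc ∑ d : D, S.superchar X (x * d)
          = ∑ d : D, ∑ f ∈ X, f 1 * f (x * d) := rfl
        _ = ∑ f ∈ X, ∑ d : D, f 1 * f (x * d) := Finset.sum_comm
        _ = ∑ f ∈ X, f 1 * ∑ d : D, f (x * d) :=
            Finset.sum_congr rfl fun f _ => by rw [Finset.mul_sum]
    rw [h1]
    have h2 : ∀ f ∈ X, f 1 * ∑ d : D, f (x * d)
        = if P S f then (Fintype.card D : ℂ) * (f 1 * f x) else 0 := by
      intro f hf
      have hirr := mem_U_irr S (part_subset_U S hX hf)
      by_cases hPf : P S f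
      · rw [if_pos hPf, sum_of_P S hirr hPf x]; ring
      · rw [if_neg hPf, sum_of_notP S hirr hPf x, mul_zero]
    rw [Finset.sum_congr rfl h2, Finset.sum_ite, Finset.sum_const_zero, add_zero, hσ',
      Finset.mul_sum]
  -- σ' is a superclass function
  have hσ'Vcf : σ' ∈ Vcf S := by
    have hT : (fun x => ∑ d : D, S.superchar X (x * d)) ∈ Vcf S := by
      intro a b hab
      show ∑ d : D, S.superchar X (b * d) = ∑ d : D, S.superchar X (a * d)
      have hd₀ : a⁻¹ * b ∈ D := mem_derived_of_cls S hab
      have hb : b = a * (a⁻¹ * b) := by group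
      calc ∑ d : D, S.superchar X (b * d)
          = ∑ d : D, S.superchar X (a * ((⟨a⁻¹ * b, hd₀⟩ : D) * d)) := by
            refine Finset.sum_congr rfl fun d _ => by rw [← mul_assoc, ← hb]
        _ = ∑ d : D, S.superchar X (a * d) :=
            Fintype.sum_equiv (Equiv.mulLeft (⟨a⁻¹ * b, hd₀⟩ : D)) _ _ (fun d => rfl)
    have : σ' = (Fintype.card D : ℂ)⁻¹ • (fun x => ∑ d : D, S.superchar X (x * d)) := by
      funext x
      rw [Pi.smul_apply, hTσ x, smul_eq_mul, ← mul_assoc, inv_mul_cancel₀ hcD, one_mul]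
    rw [this]
    exact Submodule.smul_mem _ _ hT
  obtain ⟨c, hc⟩ := mem_span_coeff S hσ'Vcf
  -- compare coefficients of irreducible characters
  set b : (G → ℂ) → ℂ :=
    fun f => coefAt S c f * f 1 - (if f ∈ X ∧ P S f then f 1 else 0) with hb
  have hzero : ∀ x : G, ∑ f ∈ U S, b f * f x = 0 := by
    intro x
    have h3 : ∑ f ∈ U S, (if f ∈ X ∧ P S f then f 1 else 0) * f x = σ' x := by
      have h4 : ∀ f : G → ℂ, (if f ∈ X ∧ P S f then f 1 else 0) * f x
          = if f ∈ X then (if P S f then f 1 * f x else 0) else 0 := by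
        intro f
        by_cases hfX : f ∈ X <;> by_cases hPf : P S f <;> simp [hfX, hPf]
      rw [Finset.sum_congr rfl (fun f _ => h4 f), sum_over_part S hX, hσ']
      rw [Finset.sum_ite, Finset.sum_const_zero, add_zero]
    have h5 : ∑ f ∈ U S, (coefAt S c f * f 1) * f x = σ' x := by
      rw [sum_U_eq S c x, hc x]
    calc ∑ f ∈ U S, b f * f x
        = ∑ f ∈ U S, ((coefAt S c f * f 1) * f x
            - (if f ∈ X ∧ P S f then f 1 else 0) * f x) := by
          refine Finset.sum_congr rfl fun f _ => by rw [hb]; ring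
      _ = 0 := by rw [Finset.sum_sub_distrib, h3, h5, sub_self]
  have hball := ind S b hzero
  have hone₀ := irrchar_one_ne_zero (mem_U_irr S (part_subset_U S hX h₀))
  have hone₁ := irrchar_one_ne_zero (mem_U_irr S (part_subset_U S hX h₁))
  have hb₀ : coefAt S c f₀ * f₀ 1 - (if f₀ ∈ X ∧ P S f₀ then f₀ 1 else 0) = 0 :=
    hball f₀ (part_subset_U S hX h₀)
  have hb₁ : coefAt S c f₁ * f₁ 1 - (if f₁ ∈ X ∧ P S f₁ then f₁ 1 else 0) = 0 :=
    hball f₁ (part_subset_U S hX h₁)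
  rw [coefAt_eq S hX h₀, if_pos ⟨h₀, hP₀⟩, sub_eq_zero] at hb₀
  rw [coefAt_eq S hX h₁, if_neg (fun hand => hP₁ hand.2), sub_zero] at hb₁
  have hcX : c ⟨X, hX⟩ = 1 := by
    have h7 : c ⟨X, hX⟩ * f₀ 1 = 1 * f₀ 1 := by rw [one_mul, hb₀]
    exact mul_right_cancel₀ hone₀ h7
  rw [hcX, one_mul] at hb₁
  exact hone₁ hb₁
end CaminaAux

namespace CaminaAux

variable {G : Type} [Group G] [Fintype G] (S : SCT G)

theorem superchar_one_ne_zero {X : Finset (G → ℂ)} (hX : X ∈ S.parts) :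
    S.superchar X 1 ≠ 0 := by
  have hex : ∀ f ∈ X, ∃ n : ℕ, 0 < n ∧ f 1 = n := fun f hf =>
    irrchar_one (mem_U_irr S (part_subset_U S hX hf))
  choose! n hpos hval using hex
  have h1 : S.superchar X 1 = ((∑ f ∈ X, n f * n f : ℕ) : ℂ) := by
    show ∑ f ∈ X, f 1 * f 1 = ((∑ f ∈ X, n f * n f : ℕ) : ℂ)
    rw [Nat.cast_sum]
    exact Finset.sum_congr rfl fun f hf => by rw [hval f hf]; push_cast; ring
  rw [h1]
  obtain ⟨f₀, hf₀⟩ := S.parts_nonempty X hX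
  have hposs : 0 < ∑ f ∈ X, n f * n f :=
    Finset.sum_pos' (fun f _ => Nat.zero_le _)
      ⟨f₀, hf₀, Nat.mul_pos (hpos f₀ hf₀) (hpos f₀ hf₀)⟩
  exact_mod_cast hposs.ne'

theorem superchar_mul_comm {X : Finset (G → ℂ)} (hX : X ∈ S.parts) (a b : G) :
    S.superchar X (a * b) = S.superchar X (b * a) := by
  show ∑ f ∈ X, f 1 * f (a * b) = ∑ f ∈ X, f 1 * f (b * a)
  exact Finset.sum_congr rfl fun f hf => by
    rw [irrchar_mul_comm (mem_U_irr S (part_subset_U S hX hf)) a b]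

theorem sigma_sum_split {X : Finset (G → ℂ)} (x : G) :
    ∑ d : S.derived, S.superchar X (x * d) = ∑ f ∈ X, f 1 * ∑ d : S.derived, f (x * d) := by
  calc ∑ d : S.derived, S.superchar X (x * d)
      = ∑ d : S.derived, ∑ f ∈ X, f 1 * f (x * d) := rfl
    _ = ∑ f ∈ X, ∑ d : S.derived, f 1 * f (x * d) := Finset.sum_comm
    _ = ∑ f ∈ X, f 1 * ∑ d : S.derived, f (x * d) :=
        Finset.sum_congr rfl fun f _ => by rw [Finset.mul_sum]

theorem sigma_sum_allP {X : Finset (G → ℂ)} (hX : X ∈ S.parts)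
    (hall : ∀ f ∈ X, P S f) (x : G) :
    ∑ d : S.derived, S.superchar X (x * d)
      = (Fintype.card S.derived : ℂ) * S.superchar X x := by
  rw [sigma_sum_split]
  have : ∀ f ∈ X, f 1 * ∑ d : S.derived, f (x * d)
      = (Fintype.card S.derived : ℂ) * (f 1 * f x) := fun f hf => by
    rw [sum_of_P S (mem_U_irr S (part_subset_U S hX hf)) (hall f hf) x]; ring
  rw [Finset.sum_congr rfl this, ← Finset.mul_sum]
  rfl

theorem sigma_sum_notall {X : Finset (G → ℂ)} (hX : X ∈ S.parts)
    (hnall : ¬ ∀ f ∈ X, P S f) (x : G) :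
    ∑ d : S.derived, S.superchar X (x * d) = 0 := by
  rw [sigma_sum_split]
  have hnone : ∀ f ∈ X, ¬ P S f := by
    intro f hf hPf
    apply hnall
    intro f' hf'
    exact allnot S hX hf hf' hPf
  have : ∀ f ∈ X, f 1 * ∑ d : S.derived, f (x * d) = 0 := fun f hf => by
    rw [sum_of_notP S (mem_U_irr S (part_subset_U S hX hf)) (hnone f hf) x, mul_zero]
  rw [Finset.sum_congr rfl this, Finset.sum_const_zero]

theorem allP_iff {X : Finset (G → ℂ)} (hX : X ∈ S.parts) :
    (∀ f ∈ X, P S f) ↔ S.derived ≤ charKer (S.superchar X) := by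
  constructor
  · intro hall d hd
    show ∀ h : G, S.superchar X (d * h) = S.superchar X h
    intro h
    show ∑ f ∈ X, f 1 * f (d * h) = ∑ f ∈ X, f 1 * f h
    exact Finset.sum_congr rfl fun f hf => by rw [hall f hf d hd h]
  · intro hle
    by_contra hnall
    have hcD : (Fintype.card S.derived : ℂ) ≠ 0 := Nat.cast_ne_zero.mpr Fintype.card_ne_zero
    have h0 := sigma_sum_notall S hX hnall 1
    have h1 : ∀ d : S.derived, S.superchar X (1 * (d : G)) = S.superchar X 1 := by
      intro d
      rw [superchar_mul_comm S hX 1 d]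
      exact hle d.2 1
    rw [Finset.sum_congr rfl (fun d _ => h1 d), Finset.sum_const, Finset.card_univ,
      nsmul_eq_mul] at h0
    exact superchar_one_ne_zero S hX ((mul_eq_zero.mp h0).resolve_left hcD)

end CaminaAux
/-- `g` is an `S`-Camina element iff `Cl_S(g) = g[G,S]`. -/
theorem caminaElt_iff_cls_eq_coset (S : SCT G) (g : G) :
    S.IsCaminaElt g ↔ S.cls g = g • (S.derived : Set G) := by
  classical
  have hcD : (Fintype.card S.derived : ℂ) ≠ 0 := Nat.cast_ne_zero.mpr Fintype.card_ne_zero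
  constructor
  · -- Camina element implies the class is the full coset
    intro hCam
    have hsub : S.cls g ⊆ g • (S.derived : Set G) := CaminaAux.cls_subset_coset S g
    set e : G → ℂ := fun x => if x ∈ S.cls g then (1 : ℂ) else 0 with he
    obtain ⟨c, hc⟩ := CaminaAux.mem_span_coeff S (CaminaAux.indicator_mem_Vcf S g)
    have hB : ∀ X ∈ S.parts, ¬ (∀ f ∈ X, CaminaAux.P S f) → S.superchar X g = 0 := by
      intro X hX hnall
      exact hCam _ ⟨⟨X, hX, rfl⟩, fun hle => hnall ((CaminaAux.allP_iff S hX).mpr hle)⟩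
    -- evaluate the D-sum of the indicator via supercharacters
    have key : ∑ d : S.derived, e (g * d) = (Fintype.card S.derived : ℂ) := by
      have h1 : ∀ d : S.derived, e (g * d)
          = ∑ X ∈ S.parts.attach, c X * S.superchar X.1 (g * d) := fun d => (hc _).symm
      have h2 : ∀ X ∈ S.parts.attach,
          c X * ∑ d : S.derived, S.superchar X.1 (g * d)
            = (Fintype.card S.derived : ℂ) * (c X * S.superchar X.1 g) := by
        intro X _
        by_cases hall : ∀ f ∈ X.1, CaminaAux.P S f
        · rw [CaminaAux.sigma_sum_allP S X.2 hall g]; ring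
        · rw [CaminaAux.sigma_sum_notall S X.2 hall g, hB X.1 X.2 hall]; ring
      calc ∑ d : S.derived, e (g * d)
          = ∑ d : S.derived, ∑ X ∈ S.parts.attach, c X * S.superchar X.1 (g * d) :=
            Finset.sum_congr rfl fun d _ => h1 d
        _ = ∑ X ∈ S.parts.attach, ∑ d : S.derived, c X * S.superchar X.1 (g * d) :=
            Finset.sum_comm
        _ = ∑ X ∈ S.parts.attach, c X * ∑ d : S.derived, S.superchar X.1 (g * d) :=
            Finset.sum_congr rfl fun X _ => by rw [Finset.mul_sum]
        _ = ∑ X ∈ S.parts.attach, (Fintype.card S.derived : ℂ) * (c X * S.superchar X.1 g) :=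
            Finset.sum_congr rfl h2
        _ = (Fintype.card S.derived : ℂ) * ∑ X ∈ S.parts.attach, c X * S.superchar X.1 g := by
            rw [Finset.mul_sum]
        _ = (Fintype.card S.derived : ℂ) * e g := by rw [hc g]
        _ = (Fintype.card S.derived : ℂ) := by
            rw [he]
            simp only [if_pos (S.mem_cls g), mul_one]
    -- counting
    set Cf : Finset G := Finset.univ.filter (· ∈ S.cls g) with hCf
    set Df : Finset G := Finset.univ.filter (· ∈ g • (S.derived : Set G)) with hDf
    have hcount : ∑ d : S.derived, e (g * d) = (Cf.card : ℂ) := by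
      rw [he]
      simp only []
      rw [Finset.sum_boole]
      congr 1
      apply Finset.card_bij (fun (d : S.derived) _ => g * (d : G))
      · intro d hd
        rw [hCf, Finset.mem_filter]
        exact ⟨Finset.mem_univ _, (Finset.mem_filter.mp hd).2⟩
      · intro d₁ _ d₂ _ hmul
        exact Subtype.ext (mul_left_cancel hmul)
      · intro x hx
        have hxc : x ∈ S.cls g := (Finset.mem_filter.mp hx).2
        obtain ⟨d, hd, hgd⟩ := hsub hxc
        refine ⟨⟨d, hd⟩, Finset.mem_filter.mpr ⟨Finset.mem_univ _, ?_⟩, ?_⟩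
        · show g * d ∈ S.cls g
          rw [show g * d = x from hgd]
          exact hxc
        · exact hgd
    have hDcard : Df.card = Fintype.card S.derived := by
      symm
      rw [← Finset.card_univ]
      apply Finset.card_bij (fun (d : S.derived) _ => g * (d : G))
      · intro d _
        rw [hDf, Finset.mem_filter]
        exact ⟨Finset.mem_univ _, ⟨d, d.2, rfl⟩⟩
      · intro d₁ _ d₂ _ hmul
        exact Subtype.ext (mul_left_cancel hmul)
      · intro x hx
        obtain ⟨d, hd, hgd⟩ := (Finset.mem_filter.mp hx).2
        exact ⟨⟨d, hd⟩, Finset.mem_univ _, hgd⟩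
    have hCcard : Cf.card = Fintype.card S.derived := by
      have : (Cf.card : ℂ) = (Fintype.card S.derived : ℂ) := by rw [← hcount, key]
      exact_mod_cast this
    have hCD : Cf ⊆ Df := by
      intro x hx
      rw [hDf, Finset.mem_filter]
      exact ⟨Finset.mem_univ _, hsub (Finset.mem_filter.mp hx).2⟩
    have hfeq : Cf = Df := Finset.eq_of_subset_of_card_le hCD (by rw [hDcard, hCcard])
    ext x
    constructor
    · intro hx
      have : x ∈ Df := hfeq ▸ Finset.mem_filter.mpr ⟨Finset.mem_univ _, hx⟩
      exact (Finset.mem_filter.mp this).2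
    · intro hx
      have : x ∈ Cf := hfeq ▸ Finset.mem_filter.mpr ⟨Finset.mem_univ _, hx⟩
      exact (Finset.mem_filter.mp this).2
  · -- full coset implies Camina element
    intro hcls f hf
    obtain ⟨⟨X, hX, hfeq⟩, hnle⟩ := hf
    subst hfeq
    have hnall : ¬ ∀ f ∈ X, CaminaAux.P S f := fun hall =>
      hnle ((CaminaAux.allP_iff S hX).mp hall)
    have h0 := CaminaAux.sigma_sum_notall S hX hnall g
    have hconst : ∀ d : S.derived, S.superchar X (g * d) = S.superchar X g := by
      intro d
      have hmem : g * (d : G) ∈ S.cls g := by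
        rw [hcls]
        exact ⟨d, d.2, rfl⟩
      exact S.const X hX g (g * d) hmem
    rw [Finset.sum_congr rfl (fun d _ => hconst d), Finset.sum_const, Finset.card_univ,
      nsmul_eq_mul] at h0
    exact (mul_eq_zero.mp h0).resolve_left hcD
end

section
/- Let S be a supercharacter theory of a finite group G and let g ∈ G. Then g is an S-Camina element if and only if for every z ∈ [G,S] there exists y ∈ Cl_S(g) with g⁻¹y = z. -/
open scoped BigOperators Pointwise

variable {G : Type} [Group G] [Fintype G]

section Aux
open CategoryTheory Module

variable {G : Type} [Group G] [Fintype G]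

private lemma cardG_ne_zero : (Fintype.card G : ℂ) ≠ 0 :=
  Nat.cast_ne_zero.mpr Fintype.card_ne_zero

open Classical in
private lemma orth_VW (V W : FDRep ℂ G) [Simple V] [Simple W] :
    ∑ g : G, V.character g * W.character g⁻¹ = if Nonempty (V ≅ W) then (Fintype.card G : ℂ) else 0 := by
  have h := FDRep.char_orthonormal (k := ℂ) (G := G) V W
  rw [Nat.card_eq_fintype_card, inv_mul_eq_iff_eq_mul₀ cardG_ne_zero] at h
  rw [h]
  split <;> simp

private lemma irr_orth {f f' : G → ℂ} (hf : IsIrrChar G f) (hf' : IsIrrChar G f') :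
    ∑ x : G, f x * f' x⁻¹ = if f = f' then (Fintype.card G : ℂ) else 0 := by
  classical
  obtain ⟨V, hV, rfl⟩ := hf
  obtain ⟨W, hW, rfl⟩ := hf'
  haveI := hV; haveI := hW
  by_cases h : V.character = W.character
  · rw [if_pos h, ← h, orth_VW V V, if_pos ⟨Iso.refl V⟩]
  · rw [if_neg h, orth_VW V W, if_neg]
    rintro ⟨i⟩
    exact h (FDRep.char_iso i)

private lemma irr_mul_comm {f : G → ℂ} (hf : IsIrrChar G f) (a b : G) : f (a * b) = f (b * a) := by
  obtain ⟨V, hV, rfl⟩ := hf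
  exact FDRep.char_mul_comm V b a

private lemma irr_one_nat {f : G → ℂ} (hf : IsIrrChar G f) : ∃ n : ℕ, 0 < n ∧ f 1 = n := by
  obtain ⟨V, hV, hfV⟩ := hf
  haveI := hV
  refine ⟨finrank ℂ V, ?_, by rw [← hfV]; simpa using FDRep.char_one V⟩
  rcases Nat.eq_zero_or_pos (finrank ℂ V) with h0 | h0
  · exfalso
    haveI : Subsingleton V := Module.finrank_zero_iff.mp h0
    have hzero : ∀ x : G, V.character x = 0 := by
      intro x
      have : V.ρ x = 0 := Subsingleton.elim _ _
      rw [FDRep.character, this, map_zero]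
    have := irr_orth (f := V.character) (f' := V.character) ⟨V, hV, rfl⟩ ⟨V, hV, rfl⟩
    rw [if_pos rfl] at this
    simp only [hzero, zero_mul, Finset.sum_const_zero] at this
    exact cardG_ne_zero this.symm
  · exact h0

private lemma irr_one_ne_zero {f : G → ℂ} (hf : IsIrrChar G f) : f 1 ≠ 0 := by
  obtain ⟨n, hn, hfn⟩ := irr_one_nat hf
  rw [hfn]
  exact_mod_cast Nat.cast_ne_zero.mpr hn.ne'

private lemma avg_dichotomy (D : Subgroup G) (hD : D.Normal) (DF : Finset G)
    (hDF : ∀ x, x ∈ DF ↔ x ∈ D) {f : G → ℂ} (hf : IsIrrChar G f) :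
    (∀ z ∈ D, ∀ h : G, f (z * h) = f h) ∨
      (∀ h : G, ∑ z ∈ DF, f (h * z) = 0) := by
  classical
  obtain ⟨V, hV, rfl⟩ := hf
  haveI := hV
  set Q : V →ₗ[ℂ] V := ∑ z ∈ DF, V.ρ z with hQ
  have hleft : ∀ z₀ ∈ D, (V.ρ z₀) * Q = Q := by
    intro z₀ hz₀
    rw [hQ, Finset.mul_sum]
    refine Finset.sum_nbij' (fun z => z₀ * z) (fun z => z₀⁻¹ * z) ?_ ?_ ?_ ?_ ?_
    · intro a ha; rw [hDF] at ha ⊢; exact D.mul_mem hz₀ ha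
    · intro a ha; rw [hDF] at ha ⊢; exact D.mul_mem (D.inv_mem hz₀) ha
    · intro a _; group
    · intro a _; group
    · intro a _; rw [← map_mul]
  have hcomm : ∀ x : G, (V.ρ x) * Q = Q * (V.ρ x) := by
    intro x
    rw [hQ, Finset.mul_sum, Finset.sum_mul]
    refine Finset.sum_nbij' (fun z => x * z * x⁻¹) (fun z => x⁻¹ * z * x) ?_ ?_ ?_ ?_ ?_
    · intro a ha; rw [hDF] at ha ⊢; exact hD.conj_mem a ha x
    · intro a ha; rw [hDF] at ha ⊢; simpa using hD.conj_mem a ha x⁻¹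
    · intro a _; group
    · intro a _; group
    · intro a _; rw [← map_mul, ← map_mul]; congr 1; group
  let φ : V ⟶ V := ⟨⟨ModuleCat.ofHom Q⟩, fun x => by ext v; exact congrArg (fun f => f v) (hcomm x).symm⟩
  have hfin : finrank ℂ (V ⟶ V) = 1 := by
    rw [FDRep.finrank_hom_simple_simple V V, if_pos ⟨Iso.refl V⟩]
  have hspan : Submodule.span ℂ {(𝟙 V : V ⟶ V)} = ⊤ :=
    (finrank_eq_one_iff_of_nonzero (𝟙 V : V ⟶ V) (id_nonzero V)).mp hfin
  obtain ⟨c, hc⟩ : ∃ c : ℂ, c • (𝟙 V : V ⟶ V) = φ :=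
    Submodule.mem_span_singleton.mp (hspan ▸ Submodule.mem_top (x := φ))
  have hQc : Q = c • LinearMap.id := by have h := congrArg (fun f => f.hom.hom.hom) hc; exact h.symm.trans rfl
  by_cases hc0 : c = 0
  · right
    intro h
    have : ∑ z ∈ DF, V.character (h * z) = LinearMap.trace ℂ V ((V.ρ h) * Q) := by
      rw [hQ, Finset.mul_sum, map_sum]
      exact Finset.sum_congr rfl fun z _ => by rw [FDRep.character, map_mul]
    rw [this, hQc, hc0, zero_smul, mul_zero, map_zero]
  · left
    intro z₀ hz₀ h
    have h1 : (V.ρ z₀) * Q = Q := hleft z₀ hz₀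
    rw [hQc, mul_smul_comm] at h1
    have h2 : V.ρ z₀ = LinearMap.id := by simpa [Module.End.mul_eq_comp] using smul_right_injective (V →ₗ[ℂ] V) hc0 h1
    rw [FDRep.character, map_mul, h2, Module.End.mul_eq_comp, LinearMap.id_comp]
    rfl

section Aux2
open Module

variable {G : Type} [Group G] [Fintype G]

private lemma superchar_eval (S : SCT G) (X : Finset (G → ℂ)) (x : G) :
    S.superchar X x = ∑ χ ∈ X, χ 1 * χ x := rfl

private lemma mem_part_irr (S : SCT G) {X : Finset (G → ℂ)} (hX : X ∈ S.parts)
    {χ : G → ℂ} (hχ : χ ∈ X) : IsIrrChar G χ :=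
  (S.parts_cover χ).mpr ⟨X, hX, hχ⟩

private lemma superchar_cls (S : SCT G) {X : Finset (G → ℂ)} (hX : X ∈ S.parts)
    {a b : G} (h : b ∈ S.cls a) : S.superchar X b = S.superchar X a :=
  S.const X hX a b h

private lemma superchar_one_ne_zero (S : SCT G) {X : Finset (G → ℂ)} (hX : X ∈ S.parts) :
    S.superchar X 1 ≠ 0 := by
  have hre : 0 < (S.superchar X 1).re := by
    rw [superchar_eval, Complex.re_sum]
    refine Finset.sum_pos ?_ (S.parts_nonempty X hX)
    intro χ hχ
    obtain ⟨n, hn, h1⟩ := irr_one_nat (mem_part_irr S hX hχ)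
    rw [h1, ← Nat.cast_mul]
    simpa using Nat.mul_pos hn hn
  intro h; rw [h] at hre; simp at hre

private lemma pair_superchar (S : SCT G) {X : Finset (G → ℂ)} (hX : X ∈ S.parts)
    {χ : G → ℂ} (hχ : IsIrrChar G χ) :
    ∑ x : G, S.superchar X x * χ x⁻¹ = if χ ∈ X then χ 1 * (Fintype.card G : ℂ) else 0 := by
  classical
  have h1 : ∀ x : G, S.superchar X x * χ x⁻¹ = ∑ ψ ∈ X, ψ 1 * (ψ x * χ x⁻¹) := by
    intro x; rw [superchar_eval, Finset.sum_mul]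
    exact Finset.sum_congr rfl fun ψ _ => by ring
  rw [Finset.sum_congr rfl fun x _ => h1 x, Finset.sum_comm]
  have h2 : ∀ ψ ∈ X, ∑ x : G, ψ 1 * (ψ x * χ x⁻¹)
      = if ψ = χ then ψ 1 * (Fintype.card G : ℂ) else 0 := by
    intro ψ hψ
    rw [← Finset.mul_sum, irr_orth (mem_part_irr S hX hψ) hχ]
    split <;> simp
  rw [Finset.sum_congr rfl h2, Finset.sum_ite_eq' X χ (fun ψ => ψ 1 * (Fintype.card G : ℂ))]

private lemma span_pair (S : SCT G) (c : ↥S.parts → ℂ) {X : Finset (G → ℂ)} (hX : X ∈ S.parts)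
    {χ : G → ℂ} (hχX : χ ∈ X) :
    ∑ w : G, (∑ Y : ↥S.parts, c Y • S.superchar (Y : Finset (G → ℂ))) w * χ w⁻¹
      = c ⟨X, hX⟩ * (χ 1 * (Fintype.card G : ℂ)) := by
  classical
  have hirr := mem_part_irr S hX hχX
  have hswap : ∑ w : G, (∑ Y : ↥S.parts, c Y • S.superchar (Y : Finset (G → ℂ))) w * χ w⁻¹
      = ∑ Y : ↥S.parts, c Y * ∑ w : G, S.superchar (Y : Finset (G → ℂ)) w * χ w⁻¹ := by
    simp only [Finset.sum_apply, Pi.smul_apply, smul_eq_mul, Finset.sum_mul, Finset.mul_sum]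
    rw [Finset.sum_comm]
    exact Finset.sum_congr rfl fun Y _ => Finset.sum_congr rfl fun w _ => by ring
  rw [hswap]
  have hother : ∀ Y : ↥S.parts, Y ≠ ⟨X, hX⟩ →
      c Y * ∑ w : G, S.superchar (Y : Finset (G → ℂ)) w * χ w⁻¹ = 0 := by
    intro Y hne
    have hne' : (Y : Finset (G → ℂ)) ≠ X := fun h => hne (Subtype.ext h)
    rw [pair_superchar S Y.2 hirr, if_neg, mul_zero]
    exact fun hmem => Finset.disjoint_left.mp (S.parts_disj _ Y.2 _ hX hne') hmem hχX
  rw [Fintype.sum_eq_single ⟨X, hX⟩ hother, pair_superchar S hX hirr, if_pos hχX]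

open Classical in
private lemma superclass_span (S : SCT G) {f : G → ℂ}
    (hf : ∀ x y : G, y ∈ S.cls x → f y = f x) :
    ∃ c : ↥S.parts → ℂ,
      ∑ X : ↥S.parts, c X • S.superchar (X : Finset (G → ℂ)) = f := by
  haveI : Fintype ↥(Set.range S.cls) := (Set.finite_range S.cls).fintype
  set L : (↥(Set.range S.cls) → ℂ) →ₗ[ℂ] (G → ℂ) :=
    { toFun := fun φ x => φ ⟨S.cls x, Set.mem_range_self x⟩
      map_add' := fun a b => rfl
      map_smul' := fun m a => rfl } with hLdef
  have hLapp : ∀ (φ : ↥(Set.range S.cls) → ℂ) (x : G),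
      L φ x = φ ⟨S.cls x, Set.mem_range_self x⟩ := fun _ _ => rfl
  have hLinj : Function.Injective L := by
    intro a b hab
    funext C
    obtain ⟨x, hx⟩ := C.2
    have hCx : (⟨S.cls x, Set.mem_range_self x⟩ : ↥(Set.range S.cls)) = C := Subtype.ext hx
    rw [← hCx]
    exact congrFun hab x
  have hmemL : ∀ u : G → ℂ, (∀ x y : G, y ∈ S.cls x → u y = u x) →
      u ∈ LinearMap.range L := by
    intro u hu
    refine ⟨fun C => u C.2.choose, ?_⟩
    funext x
    rw [hLapp]
    have hspec : S.cls ((⟨S.cls x, Set.mem_range_self x⟩ : ↥(Set.range S.cls)).2.choose)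
        = S.cls x := (⟨S.cls x, Set.mem_range_self x⟩ : ↥(Set.range S.cls)).2.choose_spec
    exact (hu _ x (by rw [hspec]; exact S.mem_cls x)).symm
  have hrank1 : finrank ℂ (LinearMap.range L) = S.parts.card := by
    rw [LinearMap.finrank_range_of_inj hLinj, Module.finrank_pi, S.card_eq,
      Nat.card_eq_fintype_card]
  have hindep : LinearIndependent ℂ
      (fun X : ↥S.parts => S.superchar (X : Finset (G → ℂ))) := by
    rw [Fintype.linearIndependent_iff]
    intro c hc X₀
    obtain ⟨χ, hχ⟩ := S.parts_nonempty _ X₀.2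
    have h0 : ∑ w : G, (∑ Y : ↥S.parts, c Y • S.superchar (Y : Finset (G → ℂ))) w * χ w⁻¹
        = 0 := by rw [hc]; simp
    rw [span_pair S c X₀.2 hχ] at h0
    rcases mul_eq_zero.mp h0 with h | h
    · simpa using h
    · exact absurd h (mul_ne_zero (irr_one_ne_zero (mem_part_irr S X₀.2 hχ)) cardG_ne_zero)
  have hsub : Submodule.span ℂ
      (Set.range fun X : ↥S.parts => S.superchar (X : Finset (G → ℂ))) ≤ LinearMap.range L := by
    rw [Submodule.span_le]
    rintro _ ⟨X, rfl⟩
    exact hmemL _ fun x y hy => superchar_cls S X.2 hy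
  have hrank2 : finrank ℂ (Submodule.span ℂ
      (Set.range fun X : ↥S.parts => S.superchar (X : Finset (G → ℂ)))) = S.parts.card := by
    rw [finrank_span_eq_card hindep, Fintype.card_coe]
  have hEq : Submodule.span ℂ
      (Set.range fun X : ↥S.parts => S.superchar (X : Finset (G → ℂ))) = LinearMap.range L :=
    Submodule.eq_of_le_of_finrank_le hsub (by rw [hrank1, hrank2])
  have hfmem : f ∈ Submodule.span ℂ
      (Set.range fun X : ↥S.parts => S.superchar (X : Finset (G → ℂ))) := by
    rw [hEq]; exact hmemL f hf
  exact (Submodule.mem_span_range_iff_exists_fun ℂ).mp hfmem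

private lemma mem_derived_of_cls (S : SCT G) {h k : G} (hk : k ∈ S.cls h) :
    h⁻¹ * k ∈ S.derived :=
  Subgroup.subset_closure ⟨h, Subgroup.mem_top h, k, hk, rfl⟩

private lemma cls_mem_congr (S : SCT G) {x y : G} (hy : y ∈ S.cls x) (g : G) :
    y ∈ S.cls g ↔ x ∈ S.cls g := by
  have hxy : S.cls y = S.cls x := S.cls_eq x y hy
  constructor
  · intro hyg
    have h1 : S.cls y = S.cls g := S.cls_eq g y hyg
    rw [← h1, hxy]; exact S.mem_cls x
  · intro hxg
    have h1 : S.cls x = S.cls g := S.cls_eq g x hxg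
    rw [← h1]; exact hy

open Classical in
private lemma cls_conj (S : SCT G) {h k : G} (hk : k ∈ S.cls h) (x : G) :
    x * k * x⁻¹ ∈ S.cls (x * h * x⁻¹) := by
  set δ : G → ℂ := fun w => if w ∈ S.cls (x * h * x⁻¹) then 1 else 0 with hδ
  obtain ⟨c, hc⟩ := superclass_span S (f := δ)
    (fun a b hb => if_congr (cls_mem_congr S hb _) rfl rfl)
  have hval : ∀ w : G, δ w = ∑ Y : ↥S.parts, c Y * S.superchar (Y : Finset (G → ℂ)) w := by
    intro w
    rw [← congrFun hc w]
    simp [Finset.sum_apply]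
  have hkey : ∀ Y : ↥S.parts, S.superchar (Y : Finset (G → ℂ)) (x * k * x⁻¹)
      = S.superchar (Y : Finset (G → ℂ)) (x * h * x⁻¹) := by
    intro Y
    have e1 : ∀ a : G, S.superchar (Y : Finset (G → ℂ)) (x * a * x⁻¹)
        = S.superchar (Y : Finset (G → ℂ)) a := by
      intro a
      rw [superchar_eval, superchar_eval]
      refine Finset.sum_congr rfl fun χ hχ => ?_
      rw [irr_mul_comm (mem_part_irr S Y.2 hχ) (x * a) x⁻¹]
      congr 2
      group
    rw [e1 k, e1 h]
    exact superchar_cls S Y.2 hk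
  have hδeq : δ (x * k * x⁻¹) = δ (x * h * x⁻¹) := by
    rw [hval, hval]
    exact Finset.sum_congr rfl fun Y _ => by rw [hkey Y]
  have h1 : δ (x * h * x⁻¹) = 1 := by rw [hδ]; simp [S.mem_cls]
  by_contra hmem
  rw [h1, hδ] at hδeq
  simp only [if_neg hmem] at hδeq
  exact zero_ne_one hδeq

private lemma derived_normal (S : SCT G) : S.derived.Normal := by
  constructor
  intro n hn x
  have key : ∀ m : G, m ∈ Subgroup.closure
      {w : G | ∃ g ∈ (⊤ : Subgroup G), ∃ k ∈ S.cls g, w = g⁻¹ * k} → x * m * x⁻¹ ∈ S.derived := by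
    intro m hm
    induction hm using Subgroup.closure_induction with
    | mem w hw =>
        obtain ⟨h, -, k, hk, rfl⟩ := hw
        have hmem := mem_derived_of_cls S (cls_conj S hk x)
        have heq : (x * h * x⁻¹)⁻¹ * (x * k * x⁻¹) = x * (h⁻¹ * k) * x⁻¹ := by group
        rw [heq] at hmem
        exact hmem
    | one => simpa using S.derived.one_mem
    | mul a b _ _ iha ihb =>
        have heq : x * (a * b) * x⁻¹ = (x * a * x⁻¹) * (x * b * x⁻¹) := by group
        rw [heq]; exact S.derived.mul_mem iha ihb
    | inv a _ iha =>
        have heq : x * a⁻¹ * x⁻¹ = (x * a * x⁻¹)⁻¹ := by group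
        rw [heq]; exact S.derived.inv_mem iha
  exact key n hn

private lemma part_dichotomy (S : SCT G) (DF : Finset G)
    (hDF : ∀ x, x ∈ DF ↔ x ∈ S.derived) {X : Finset (G → ℂ)} (hX : X ∈ S.parts) :
    (∀ χ ∈ X, ∀ z ∈ S.derived, ∀ h : G, χ (z * h) = χ h) ∨
      (∀ χ ∈ X, ∀ h : G, ∑ z ∈ DF, χ (h * z) = 0) := by
  classical
  have hNorm := derived_normal S
  by_contra hcon
  push_neg at hcon
  obtain ⟨⟨χ₁, hχ₁X, hχ₁⟩, hB⟩ := hcon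
  obtain ⟨χ₀, hχ₀X, hχ₀⟩ := hB
  have hχ₁irr := mem_part_irr S hX hχ₁X
  have hχ₀irr := mem_part_irr S hX hχ₀X
  have hχ₁nk : ¬ (∀ z ∈ S.derived, ∀ h : G, χ₁ (z * h) = χ₁ h) := by
    intro hk
    obtain ⟨z, hz, h, hne⟩ := hχ₁
    exact hne (hk z hz h)
  have hχ₀ker : ∀ z ∈ S.derived, ∀ h : G, χ₀ (z * h) = χ₀ h := by
    rcases avg_dichotomy S.derived hNorm DF hDF hχ₀irr with h | h
    · exact h
    · exfalso; obtain ⟨h', hne⟩ := hχ₀; exact hne (h h')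
  set F : G → ℂ := fun h => ∑ z ∈ DF, S.superchar X (h * z) with hF
  have hFsc : ∀ x y : G, y ∈ S.cls x → F y = F x := by
    intro x y hy
    have hd : x⁻¹ * y ∈ S.derived := mem_derived_of_cls S hy
    show (∑ z ∈ DF, S.superchar X (y * z)) = ∑ z ∈ DF, S.superchar X (x * z)
    refine Finset.sum_nbij' (fun z => (x⁻¹ * y) * z) (fun z => (x⁻¹ * y)⁻¹ * z) ?_ ?_ ?_ ?_ ?_
    · intro a ha; rw [hDF] at ha ⊢; exact S.derived.mul_mem hd ha
    · intro a ha; rw [hDF] at ha ⊢; exact S.derived.mul_mem (S.derived.inv_mem hd) ha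
    · intro a _; group
    · intro a _; group
    · intro a _; congr 1; group
  obtain ⟨c, hc⟩ := superclass_span S hFsc
  have hterm : ∀ χ : G → ℂ, χ ∈ X →
      ∑ w : G, F w * χ w⁻¹ =
        if (∀ z ∈ S.derived, ∀ h : G, χ (z * h) = χ h) then
          (DF.card : ℂ) * (χ 1 * (Fintype.card G : ℂ)) else 0 := by
    intro χ hχX
    have hχirr := mem_part_irr S hX hχX
    have hFw : ∀ w : G, F w = ∑ ψ ∈ X, ψ 1 * ∑ z ∈ DF, ψ (w * z) := by
      intro w
      show (∑ z ∈ DF, S.superchar X (w * z)) = _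
      simp only [superchar_eval]
      rw [Finset.sum_comm]
      exact Finset.sum_congr rfl fun ψ _ => by rw [Finset.mul_sum]
    have hmain : ∑ w : G, F w * χ w⁻¹
        = ∑ ψ ∈ X, ψ 1 * ∑ w : G, (∑ z ∈ DF, ψ (w * z)) * χ w⁻¹ := by
      calc ∑ w : G, F w * χ w⁻¹
          = ∑ w : G, ∑ ψ ∈ X, ψ 1 * ((∑ z ∈ DF, ψ (w * z)) * χ w⁻¹) := by
            refine Finset.sum_congr rfl fun w _ => ?_
            rw [hFw w, Finset.sum_mul]
            exact Finset.sum_congr rfl fun ψ _ => by ring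
        _ = ∑ ψ ∈ X, ∑ w : G, ψ 1 * ((∑ z ∈ DF, ψ (w * z)) * χ w⁻¹) := Finset.sum_comm
        _ = ∑ ψ ∈ X, ψ 1 * ∑ w : G, (∑ z ∈ DF, ψ (w * z)) * χ w⁻¹ := by
            exact Finset.sum_congr rfl fun ψ _ => by rw [Finset.mul_sum]
    have hinner : ∀ ψ ∈ X, ∑ w : G, (∑ z ∈ DF, ψ (w * z)) * χ w⁻¹
        = if (∀ z ∈ S.derived, ∀ h : G, ψ (z * h) = ψ h) then
            (DF.card : ℂ) * (if ψ = χ then (Fintype.card G : ℂ) else 0) else 0 := by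
      intro ψ hψX
      have hψirr := mem_part_irr S hX hψX
      by_cases hk : ∀ z ∈ S.derived, ∀ h : G, ψ (z * h) = ψ h
      · rw [if_pos hk]
        have he : ∀ w : G, ∑ z ∈ DF, ψ (w * z) = (DF.card : ℂ) * ψ w := by
          intro w
          rw [Finset.sum_congr rfl fun z hz => ?_, Finset.sum_const, nsmul_eq_mul]
          rw [irr_mul_comm hψirr w z, hk z ((hDF z).mp hz) w]
        rw [Finset.sum_congr rfl fun w _ => by rw [he w, mul_assoc], ← Finset.mul_sum,
          irr_orth hψirr hχirr]
      · rw [if_neg hk]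
        rcases avg_dichotomy S.derived hNorm DF hDF hψirr with h | h
        · exact absurd h hk
        · rw [Finset.sum_congr rfl fun w _ => by rw [h w, zero_mul], Finset.sum_const_zero]
    rw [hmain, Finset.sum_congr rfl (fun ψ hψ => by rw [hinner ψ hψ] :
      ∀ ψ ∈ X, ψ 1 * ∑ w : G, (∑ z ∈ DF, ψ (w * z)) * χ w⁻¹ =
        ψ 1 * if (∀ z ∈ S.derived, ∀ h : G, ψ (z * h) = ψ h) then
          (DF.card : ℂ) * (if ψ = χ then (Fintype.card G : ℂ) else 0) else 0)]
    by_cases hkχ : ∀ z ∈ S.derived, ∀ h : G, χ (z * h) = χ h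
    · rw [if_pos hkχ]
      rw [Finset.sum_eq_single_of_mem χ hχX ?_]
      · rw [if_pos hkχ, if_pos rfl]; ring
      · intro ψ hψX hψne
        by_cases hkψ : ∀ z ∈ S.derived, ∀ h : G, ψ (z * h) = ψ h
        · rw [if_pos hkψ, if_neg hψne, mul_zero, mul_zero]
        · rw [if_neg hkψ, mul_zero]
    · rw [if_neg hkχ]
      rw [Finset.sum_eq_zero]
      intro ψ hψX
      by_cases hkψ : ∀ z ∈ S.derived, ∀ h : G, ψ (z * h) = ψ h
      · have hψne : ψ ≠ χ := fun he => hkχ (he ▸ hkψ)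
        rw [if_pos hkψ, if_neg hψne, mul_zero, mul_zero]
      · rw [if_neg hkψ, mul_zero]
  have hc1 : ∑ w : G, F w * χ₁ w⁻¹ = c ⟨X, hX⟩ * (χ₁ 1 * (Fintype.card G : ℂ)) := by
    rw [← hc]; exact span_pair S c hX hχ₁X
  have hc0 : ∑ w : G, F w * χ₀ w⁻¹ = c ⟨X, hX⟩ * (χ₀ 1 * (Fintype.card G : ℂ)) := by
    rw [← hc]; exact span_pair S c hX hχ₀X
  rw [hterm χ₁ hχ₁X, if_neg hχ₁nk] at hc1
  rw [hterm χ₀ hχ₀X, if_pos hχ₀ker] at hc0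
  have hcX : c ⟨X, hX⟩ = 0 := by
    rcases mul_eq_zero.mp hc1.symm with h | h
    · exact h
    · exact absurd h (mul_ne_zero (irr_one_ne_zero hχ₁irr) cardG_ne_zero)
  rw [hcX, zero_mul] at hc0
  rcases mul_eq_zero.mp hc0 with h | h
  · have h1DF : (1 : G) ∈ DF := (hDF 1).mpr S.derived.one_mem
    exact Nat.cast_ne_zero.mpr (Finset.card_ne_zero_of_mem h1DF) h
  · exact mul_ne_zero (irr_one_ne_zero hχ₀irr) cardG_ne_zero h

private lemma kernel_le_charKer (S : SCT G) {X : Finset (G → ℂ)} (hX : X ∈ S.parts)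
    (hker : ∀ χ ∈ X, ∀ z ∈ S.derived, ∀ h : G, χ (z * h) = χ h) :
    S.derived ≤ charKer (S.superchar X) := by
  intro z hz
  show ∀ h : G, S.superchar X (z * h) = S.superchar X h
  intro h
  rw [superchar_eval, superchar_eval]
  exact Finset.sum_congr rfl fun χ hχ => by rw [hker χ hχ z hz h]

private lemma avg_not_le_charKer (S : SCT G) (DF : Finset G)
    (hDF : ∀ x, x ∈ DF ↔ x ∈ S.derived) {X : Finset (G → ℂ)} (hX : X ∈ S.parts)
    (havg : ∀ χ ∈ X, ∀ h : G, ∑ z ∈ DF, χ (h * z) = 0) :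
    ¬ S.derived ≤ charKer (S.superchar X) := by
  intro hle
  have h1 : ∑ z ∈ DF, S.superchar X z = 0 := by
    calc ∑ z ∈ DF, S.superchar X z
        = ∑ χ ∈ X, ∑ z ∈ DF, χ 1 * χ (1 * z) := by
          rw [Finset.sum_comm]
          exact Finset.sum_congr rfl fun z _ => by rw [superchar_eval]; simp
      _ = 0 := by
          rw [Finset.sum_eq_zero]
          intro χ hχ
          rw [← Finset.mul_sum, havg χ hχ 1, mul_zero]
  have h2 : ∀ z ∈ DF, S.superchar X z = S.superchar X 1 := by
    intro z hz
    have hz' : z ∈ S.derived := (hDF z).mp hz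
    have hmem : ∀ h : G, S.superchar X (z * h) = S.superchar X h := hle hz'
    have := hmem 1
    rwa [mul_one] at this
  rw [Finset.sum_congr rfl h2, Finset.sum_const, nsmul_eq_mul] at h1
  rcases mul_eq_zero.mp h1 with h | h
  · have h1DF : (1 : G) ∈ DF := (hDF 1).mpr S.derived.one_mem
    exact Nat.cast_ne_zero.mpr (Finset.card_ne_zero_of_mem h1DF) h
  · exact superchar_one_ne_zero S hX h

end Aux2

/-- `g` is an `S`-Camina element iff every `z ∈ [G,S]` is of the form
`g⁻¹y` with `y ∈ Cl_S(g)`. -/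
theorem caminaElt_iff_forall_exists (S : SCT G) (g : G) :
    S.IsCaminaElt g ↔ ∀ z ∈ S.derived, ∃ y ∈ S.cls g, g⁻¹ * y = z := by
  classical
  set DF : Finset G := Finset.univ.filter (· ∈ S.derived) with hDFdef
  have hDF : ∀ x, x ∈ DF ↔ x ∈ S.derived := fun x => by simp [hDFdef]
  have h1DF : (1 : G) ∈ DF := (hDF 1).mpr S.derived.one_mem
  have hDFcard : ((DF.card : ℂ)) ≠ 0 :=
    Nat.cast_ne_zero.mpr (Finset.card_ne_zero_of_mem h1DF)
  constructor
  · intro hcam z hz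
    set δ : G → ℂ := fun x => if x ∈ S.cls g then 1 else 0 with hδ
    have hδsc : ∀ x y : G, y ∈ S.cls x → δ y = δ x := fun x y hy =>
      if_congr (cls_mem_congr S hy g) rfl rfl
    obtain ⟨c, hc⟩ := superclass_span S hδsc
    have huni : ∀ Y : ↥S.parts,
        ∑ w ∈ DF, S.superchar (Y : Finset (G → ℂ)) (g * w)
          = (DF.card : ℂ) * S.superchar (Y : Finset (G → ℂ)) g := by
      intro Y
      rcases part_dichotomy S DF hDF Y.2 with hker | havg
      · have heach : ∀ w ∈ DF, S.superchar (Y : Finset (G → ℂ)) (g * w)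
            = S.superchar (Y : Finset (G → ℂ)) g := by
          intro w hw
          rw [superchar_eval, superchar_eval]
          refine Finset.sum_congr rfl fun χ hχ => ?_
          rw [irr_mul_comm (mem_part_irr S Y.2 hχ) g w, hker χ hχ w ((hDF w).mp hw) g]
        rw [Finset.sum_congr rfl heach, Finset.sum_const, nsmul_eq_mul]
      · have h0 : ∑ w ∈ DF, S.superchar (Y : Finset (G → ℂ)) (g * w) = 0 := by
          calc ∑ w ∈ DF, S.superchar (Y : Finset (G → ℂ)) (g * w)
              = ∑ χ ∈ (Y : Finset (G → ℂ)), ∑ w ∈ DF, χ 1 * χ (g * w) := by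
                rw [Finset.sum_comm]
                exact Finset.sum_congr rfl fun w _ => by rw [superchar_eval]
            _ = 0 := by
                rw [Finset.sum_eq_zero]
                intro χ hχ
                rw [← Finset.mul_sum, havg χ hχ g, mul_zero]
        have hY0 : S.superchar (Y : Finset (G → ℂ)) g = 0 :=
          hcam _ ⟨⟨(Y : Finset (G → ℂ)), Y.2, rfl⟩, avg_not_le_charKer S DF hDF Y.2 havg⟩
        rw [h0, hY0, mul_zero]
    have hδg : δ g = 1 := by rw [hδ]; simp [S.mem_cls g]
    have hexp : ∀ w : G, δ w = ∑ Y : ↥S.parts, c Y * S.superchar (Y : Finset (G → ℂ)) w := by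
      intro w
      rw [← congrFun hc w]
      simp [Finset.sum_apply]
    have hsum2 : ∑ w ∈ DF, δ (g * w) = (DF.card : ℂ) := by
      calc ∑ w ∈ DF, δ (g * w)
          = ∑ w ∈ DF, ∑ Y : ↥S.parts, c Y * S.superchar (Y : Finset (G → ℂ)) (g * w) :=
            Finset.sum_congr rfl fun w _ => hexp (g * w)
        _ = ∑ Y : ↥S.parts, ∑ w ∈ DF, c Y * S.superchar (Y : Finset (G → ℂ)) (g * w) :=
            Finset.sum_comm
        _ = ∑ Y : ↥S.parts, c Y * ((DF.card : ℂ) * S.superchar (Y : Finset (G → ℂ)) g) := by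
            refine Finset.sum_congr rfl fun Y _ => ?_
            rw [← Finset.mul_sum, huni Y]
        _ = (DF.card : ℂ) * ∑ Y : ↥S.parts, c Y * S.superchar (Y : Finset (G → ℂ)) g := by
            rw [Finset.mul_sum]
            exact Finset.sum_congr rfl fun Y _ => by ring
        _ = (DF.card : ℂ) * δ g := by rw [← hexp g]
        _ = (DF.card : ℂ) := by rw [hδg, mul_one]
    have hcount : (DF.filter (fun w => g * w ∈ S.cls g)).card = DF.card := by
      have hbool : ∑ w ∈ DF, δ (g * w)
          = ((DF.filter (fun w => g * w ∈ S.cls g)).card : ℂ) := by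
        rw [hδ]
        exact Finset.sum_boole _ _
      rw [hsum2] at hbool
      exact_mod_cast hbool.symm
    have hfeq : DF.filter (fun w => g * w ∈ S.cls g) = DF :=
      Finset.eq_of_subset_of_card_le (Finset.filter_subset _ _) (le_of_eq hcount.symm)
    have hzmem : z ∈ DF.filter (fun w => g * w ∈ S.cls g) := by
      rw [hfeq]; exact (hDF z).mpr hz
    exact ⟨g * z, (Finset.mem_filter.mp hzmem).2, by group⟩
  · intro hyp f hfrel
    obtain ⟨⟨X, hX, hfeq⟩, hnle⟩ := hfrel
    subst hfeq
    rcases part_dichotomy S DF hDF hX with hker | havg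
    · exact absurd (kernel_le_charKer S hX hker) hnle
    · have h0 : ∑ w ∈ DF, S.superchar X (g * w) = 0 := by
        calc ∑ w ∈ DF, S.superchar X (g * w)
            = ∑ χ ∈ X, ∑ w ∈ DF, χ 1 * χ (g * w) := by
              rw [Finset.sum_comm]
              exact Finset.sum_congr rfl fun w _ => by rw [superchar_eval]
          _ = 0 := by
              rw [Finset.sum_eq_zero]
              intro χ hχ
              rw [← Finset.mul_sum, havg χ hχ g, mul_zero]
      have heach : ∀ w ∈ DF, S.superchar X (g * w) = S.superchar X g := by
        intro w hw
        obtain ⟨y, hy, hyz⟩ := hyp w ((hDF w).mp hw)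
        have hygw : y = g * w := by rw [← hyz]; group
        rw [← hygw]
        exact superchar_cls S hX hy
      rw [Finset.sum_congr rfl heach, Finset.sum_const, nsmul_eq_mul] at h0
      rcases mul_eq_zero.mp h0 with h | h
      · exact absurd h hDFcard
      · exact h
end Aux
end

section
/- Let S be a supercharacter theory of a finite group G and let N be an S-normal subgroup. If (G,N) is an S-GCP (every element of G∖N is an S-Camina element), then [G,S] ≤ N. -/
open scoped BigOperators Pointwise

variable {G : Type} [Group G] [Fintype G]

section GCPaux

open CategoryTheory
open scoped Classical

namespace GCPaux

variable {G : Type} [Group G] [Fintype G]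

set_option maxHeartbeats 1000000 in
theorem char_orth (V W : FDRep ℂ G) (hV : Simple V) (hW : Simple W) :
    ∑ g : G, V.character g * W.character g⁻¹ =
      if Nonempty (V ≅ W) then (Fintype.card G : ℂ) else 0 := by
  haveI inst : Invertible (Fintype.card G : ℂ) :=
    invertibleOfNonzero (by exact_mod_cast Fintype.card_ne_zero)
  have h' : ⅟(Fintype.card G : ℂ) • ∑ g : G, V.character g * W.character g⁻¹
      = if Nonempty (V ≅ W) then 1 else 0 := by
    haveI : Invertible (Nat.card G : ℂ) :=
      invertibleOfNonzero (by exact_mod_cast (Nat.card_pos (α := G)).ne')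
    have h := FDRep.char_orthonormal (k := ℂ) (G := G) V W
    rw [Nat.card_eq_fintype_card] at h
    simpa [smul_eq_mul, invOf_eq_inv] using h
  have h2 := congrArg (fun z : ℂ => (Fintype.card G : ℂ) * z) h'
  simp only [smul_eq_mul, mul_invOf_cancel_left] at h2
  rw [h2]
  split <;> simp

/-- The bilinear pairing used for orthogonality computations. -/
noncomputable def B (f h : G → ℂ) : ℂ := ∑ g : G, f g * h g⁻¹

theorem B_irr {f h : G → ℂ} (hf : IsIrrChar G f) (hh : IsIrrChar G h) :
    B f h = if f = h then (Fintype.card G : ℂ) else 0 := by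
  obtain ⟨V, hV, rfl⟩ := hf
  obtain ⟨W, hW, rfl⟩ := hh
  rw [B, char_orth V W hV hW]
  by_cases hiso : Nonempty (V ≅ W)
  · rw [if_pos hiso, if_pos (FDRep.char_iso hiso.some)]
  · rw [if_neg hiso, if_neg]
    intro hEq
    have h1 : ∑ g : G, V.character g * W.character g⁻¹ = 0 := by
      rw [char_orth V W hV hW, if_neg hiso]
    have h2 : ∑ g : G, V.character g * W.character g⁻¹ = (Fintype.card G : ℂ) := by
      rw [hEq, char_orth W W hW hW, if_pos ⟨Iso.refl W⟩]
    rw [h1] at h2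
    exact Fintype.card_ne_zero (by exact_mod_cast h2.symm)

theorem irr_one {f : G → ℂ} (hf : IsIrrChar G f) : ∃ n : ℕ, 0 < n ∧ f 1 = n := by
  obtain ⟨V, hV, rfl⟩ := hf
  refine ⟨Module.finrank ℂ V, ?_, by exact_mod_cast FDRep.char_one V⟩
  by_contra hn
  push_neg at hn
  interval_cases h : Module.finrank ℂ V
  haveI : Subsingleton V := by
    have := Module.finrank_zero_iff (R := ℂ) (M := V)
    exact this.mp h
  have hzero : V.character = fun _ => 0 := by
    funext g
    have : V.ρ g = 0 := LinearMap.ext fun x => Subsingleton.elim _ _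
    simp [FDRep.character, this]
  have hB : B V.character V.character = (Fintype.card G : ℂ) := by
    rw [B_irr ⟨V, hV, rfl⟩ ⟨V, hV, rfl⟩, if_pos rfl]
  rw [hzero] at hB
  simp only [B, mul_zero, Finset.sum_const_zero] at hB
  exact Fintype.card_ne_zero (by exact_mod_cast hB.symm)

theorem B_sum_left {ι : Type*} (s : Finset ι) (F : ι → G → ℂ) (h : G → ℂ) :
    B (fun g => ∑ i ∈ s, F i g) h = ∑ i ∈ s, B (F i) h := by
  simp only [B, Finset.sum_mul]
  exact Finset.sum_comm

theorem B_irr_of_mem (S : SCT G) {X : Finset (G → ℂ)} (hX : X ∈ S.parts)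
    {χ : G → ℂ} (hχ : IsIrrChar G χ) :
    B (S.superchar X) χ = if χ ∈ X then χ 1 * (Fintype.card G : ℂ) else 0 := by
  have : B (S.superchar X) χ = ∑ ψ ∈ X, ψ 1 * B ψ χ := by
    rw [show S.superchar X = fun g => ∑ ψ ∈ X, ψ 1 * ψ g from rfl]
    rw [show (fun g => ∑ ψ ∈ X, ψ 1 * ψ g) = fun g => ∑ ψ ∈ X, (fun ψ' g' => ψ' 1 * ψ' g') ψ g from rfl]
    rw [B_sum_left X _ χ]
    congr 1
    funext ψ
    simp only [B, Finset.mul_sum]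
    congr 1
    funext g
    ring
  rw [this]
  have hterm : ∀ ψ ∈ X, ψ 1 * B ψ χ = if ψ = χ then χ 1 * (Fintype.card G : ℂ) else 0 := by
    intro ψ hψ
    have hψirr : IsIrrChar G ψ := (S.parts_cover ψ).mpr ⟨X, hX, hψ⟩
    rw [B_irr hψirr hχ]
    by_cases hec : ψ = χ
    · subst hec; rw [if_pos rfl, if_pos rfl]
    · rw [if_neg hec, if_neg hec, mul_zero]
  rw [Finset.sum_congr rfl hterm, Finset.sum_ite_eq' X χ (fun _ => χ 1 * (Fintype.card G : ℂ))]

/-- The space of `S`-class functions. -/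
noncomputable def classFun (S : SCT G) : Submodule ℂ (G → ℂ) where
  carrier := {f | ∀ g h : G, h ∈ S.cls g → f h = f g}
  add_mem' := by intro a b ha hb g h hgh; simp [ha g h hgh, hb g h hgh]
  zero_mem' := by intro g h _; rfl
  smul_mem' := by intro c a ha g h hgh; simp [ha g h hgh]

noncomputable instance (S : SCT G) : Fintype (Set.range S.cls) := Fintype.ofFinite _

/-- `classFun S` is linearly equivalent to functions on the set of classes. -/
noncomputable def classFunEquiv (S : SCT G) : classFun S ≃ₗ[ℂ] (Set.range S.cls → ℂ) where
  toFun f := fun c => f.1 c.2.choose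
  invFun v := ⟨fun g => v ⟨S.cls g, ⟨g, rfl⟩⟩, by
    intro g h hgh
    exact congrArg v (Subtype.ext (S.cls_eq g h hgh))⟩
  map_add' f g := rfl
  map_smul' c f := rfl
  left_inv f := by
    apply Subtype.ext
    funext g
    dsimp
    set c : Set.range S.cls := ⟨S.cls g, ⟨g, rfl⟩⟩ with hc
    have hrep : S.cls c.2.choose = S.cls g := c.2.choose_spec
    exact (f.2 c.2.choose g (hrep ▸ S.mem_cls g)).symm
  right_inv v := by
    funext c
    dsimp
    congr 1
    exact Subtype.ext c.2.choose_spec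

theorem finrank_classFun (S : SCT G) :
    Module.finrank ℂ (classFun S) = S.parts.card := by
  rw [(classFunEquiv S).finrank_eq, Module.finrank_pi, S.card_eq,
    Nat.card_eq_fintype_card]

/-- The supercharacters as a family in `classFun S`. -/
noncomputable def scFam (S : SCT G) : {X // X ∈ S.parts} → classFun S :=
  fun X => ⟨S.superchar X.1, by
    intro g h hgh
    exact S.const X.1 X.2 g h hgh⟩

theorem not_mem_of_ne (S : SCT G) {X Y : {X // X ∈ S.parts}} (hne : X ≠ Y)
    {χ : G → ℂ} (hχ : χ ∈ Y.1) : χ ∉ X.1 := by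
  intro hmem
  have hd := S.parts_disj X.1 X.2 Y.1 Y.2 (fun hEq => hne (Subtype.ext hEq))
  exact (Finset.disjoint_left.mp hd) hmem hχ

theorem B_coe_sum (S : SCT G) (c : {X // X ∈ S.parts} → ℂ) {χ : G → ℂ}
    (hχ : IsIrrChar G χ) :
    B ((∑ i, c i • scFam S i : classFun S) : G → ℂ) χ
      = ∑ i, c i * B (S.superchar i.1) χ := by
  have hcoe : ((∑ i, c i • scFam S i : classFun S) : G → ℂ)
      = fun g => ∑ i, c i * S.superchar i.1 g := by
    funext g
    rw [show ((∑ i, c i • scFam S i : classFun S) : G → ℂ)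
      = ∑ i, c i • (S.superchar i.1) from by push_cast [scFam]; rfl]
    simp
  rw [hcoe, B_sum_left Finset.univ (fun i => fun g => c i * S.superchar i.1 g) χ]
  congr 1
  funext i
  simp only [B, Finset.mul_sum]
  congr 1
  funext g
  ring

theorem linearIndependent_scFam (S : SCT G) : LinearIndependent ℂ (scFam S) := by
  rw [Fintype.linearIndependent_iff]
  intro c hc i₀
  obtain ⟨χ₀, hχ₀⟩ := S.parts_nonempty i₀.1 i₀.2
  have hχ₀irr : IsIrrChar G χ₀ := (S.parts_cover χ₀).mpr ⟨i₀.1, i₀.2, hχ₀⟩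
  have hB := B_coe_sum S c hχ₀irr
  rw [hc] at hB
  simp only [ZeroMemClass.coe_zero] at hB
  have hzero : B (0 : G → ℂ) χ₀ = 0 := by simp [B]
  rw [hzero] at hB
  have hterm : ∀ i : {X // X ∈ S.parts},
      c i * B (S.superchar i.1) χ₀ = if i = i₀ then c i₀ * (χ₀ 1 * (Fintype.card G : ℂ)) else 0 := by
    intro i
    rw [B_irr_of_mem S i.2 hχ₀irr]
    by_cases hi : i = i₀
    · subst hi; simp [if_pos hχ₀, mul_assoc]
    · simp [not_mem_of_ne S hi hχ₀, hi]
  rw [Finset.sum_congr rfl (fun i _ => hterm i), Finset.sum_ite_eq' Finset.univ i₀] at hB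
  rw [if_pos (Finset.mem_univ i₀)] at hB
  obtain ⟨n, hn, h1⟩ := irr_one hχ₀irr
  have hne : (χ₀ 1 * (Fintype.card G : ℂ)) ≠ 0 := by
    rw [h1]
    exact mul_ne_zero (by exact_mod_cast hn.ne') (by exact_mod_cast Fintype.card_ne_zero)
  exact (mul_eq_zero.mp hB.symm).resolve_right hne

theorem exists_coeffs (S : SCT G) (w : classFun S) :
    ∃ c : {X // X ∈ S.parts} → ℂ, ∑ i, c i • scFam S i = w := by
  have hspan : Submodule.span ℂ (Set.range (scFam S)) = ⊤ := by
    apply (linearIndependent_scFam S).span_eq_top_of_card_eq_finrank'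
    rw [finrank_classFun, Fintype.card_coe]
  have : w ∈ Submodule.span ℂ (Set.range (scFam S)) := by rw [hspan]; trivial
  exact (Submodule.mem_span_range_iff_exists_fun ℂ).mp this

/-- The regular-character identity: the sum of all supercharacters is `|G|·δ₁`. -/
theorem sum_superchar (S : SCT G) (g : G) :
    ∑ i : {X // X ∈ S.parts}, S.superchar i.1 g
      = if g = 1 then (Fintype.card G : ℂ) else 0 := by
  have hδ : (fun g : G => if g = 1 then (Fintype.card G : ℂ) else 0) ∈ classFun S := by
    intro a b hab
    dsimp only
    by_cases ha : a = 1
    · subst ha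
      rw [S.cls_one, Set.mem_singleton_iff] at hab
      subst hab
      rfl
    · rw [if_neg ha, if_neg]
      intro hb
      subst hb
      have h1 : S.cls 1 = S.cls a := S.cls_eq a 1 hab
      rw [S.cls_one] at h1
      have : a ∈ S.cls a := S.mem_cls a
      rw [← h1] at this
      exact ha this
  obtain ⟨c, hc⟩ := exists_coeffs S ⟨_, hδ⟩
  have hcone : ∀ i₀ : {X // X ∈ S.parts}, c i₀ = 1 := by
    intro i₀
    obtain ⟨χ₀, hχ₀⟩ := S.parts_nonempty i₀.1 i₀.2
    have hχ₀irr : IsIrrChar G χ₀ := (S.parts_cover χ₀).mpr ⟨i₀.1, i₀.2, hχ₀⟩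
    have hB := B_coe_sum S c hχ₀irr
    rw [hc] at hB
    have hL : B (fun g : G => if g = 1 then (Fintype.card G : ℂ) else 0) χ₀
        = (Fintype.card G : ℂ) * χ₀ 1 := by
      simp only [B, ite_mul, zero_mul]
      rw [Finset.sum_ite_eq' Finset.univ (1 : G)]
      simp
    have hterm : ∀ i : {X // X ∈ S.parts},
        c i * B (S.superchar i.1) χ₀
          = if i = i₀ then c i₀ * (χ₀ 1 * (Fintype.card G : ℂ)) else 0 := by
      intro i
      rw [B_irr_of_mem S i.2 hχ₀irr]
      by_cases hi : i = i₀
      · subst hi; simp [if_pos hχ₀, mul_assoc]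
      · simp [not_mem_of_ne S hi hχ₀, hi]
    rw [hL, Finset.sum_congr rfl (fun i _ => hterm i),
      Finset.sum_ite_eq' Finset.univ i₀, if_pos (Finset.mem_univ i₀)] at hB
    obtain ⟨n, hn, h1⟩ := irr_one hχ₀irr
    have hne : (χ₀ 1 * (Fintype.card G : ℂ)) ≠ 0 := by
      rw [h1]
      exact mul_ne_zero (by exact_mod_cast hn.ne') (by exact_mod_cast Fintype.card_ne_zero)
    have : c i₀ * (χ₀ 1 * (Fintype.card G : ℂ)) = 1 * (χ₀ 1 * (Fintype.card G : ℂ)) := by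
      rw [one_mul, ← hB]; ring
    exact mul_right_cancel₀ hne this
  have hfun := congrArg (fun w : classFun S => (w : G → ℂ) g) hc
  simp only at hfun
  rw [show ((∑ i, c i • scFam S i : classFun S) : G → ℂ)
    = ∑ i, c i • (S.superchar i.1) from by push_cast [scFam]; rfl] at hfun
  simp only [Finset.sum_apply, Pi.smul_apply, smul_eq_mul, hcone, one_mul] at hfun
  exact hfun

theorem re_superchar_one_pos (S : SCT G) {X : Finset (G → ℂ)} (hX : X ∈ S.parts) :
    0 < (S.superchar X 1).re := by
  rw [show S.superchar X 1 = ∑ χ ∈ X, χ 1 * χ 1 from rfl, Complex.re_sum]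
  apply Finset.sum_pos
  · intro χ hχ
    obtain ⟨n, hn, h1⟩ := irr_one ((S.parts_cover χ).mpr ⟨X, hX, hχ⟩)
    rw [h1]
    rw [show ((n : ℂ) * n) = ((n * n : ℕ) : ℂ) by push_cast; ring, Complex.natCast_re]
    positivity
  · exact S.parts_nonempty X hX

end GCPaux

end GCPaux

/-- if `(G,N)` is an `S`-GCP then `[G,S] ≤ N`. -/
theorem derived_le_of_isGCP (S : SCT G) (N : Subgroup G) (h : S.IsGCP N) :
    S.derived ≤ N := by
  classical
  by_contra hcon
  rw [SetLike.le_def] at hcon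
  push_neg at hcon
  obtain ⟨d, hd, hdN⟩ := hcon
  have hd1 : d ≠ 1 := fun hEq => hdN (hEq ▸ N.one_mem)
  have hcam := h.2 d hdN
  have hval : ∀ i : {X // X ∈ S.parts}, S.superchar i.1 d
      = if S.derived ≤ charKer (S.superchar i.1) then S.superchar i.1 1 else 0 := by
    intro i
    by_cases hle : S.derived ≤ charKer (S.superchar i.1)
    · rw [if_pos hle]
      have := hle hd 1
      rwa [mul_one] at this
    · rw [if_neg hle]
      exact hcam _ ⟨⟨i.1, i.2, rfl⟩, hle⟩
  have hKne : ∃ i : {X // X ∈ S.parts}, S.derived ≤ charKer (S.superchar i.1) := by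
    by_contra hK
    push_neg at hK
    obtain ⟨c, hc⟩ := GCPaux.exists_coeffs S
      ⟨fun _ => (1 : ℂ), fun _ _ _ => rfl⟩
    have hfun := congrArg (fun w : GCPaux.classFun S => (w : G → ℂ) d) hc
    simp only at hfun
    rw [show ((∑ i, c i • GCPaux.scFam S i : GCPaux.classFun S) : G → ℂ)
      = ∑ i, c i • (S.superchar i.1) from by push_cast [GCPaux.scFam]; rfl] at hfun
    simp only [Finset.sum_apply, Pi.smul_apply, smul_eq_mul] at hfun
    have hzero : ∀ i : {X // X ∈ S.parts}, S.superchar i.1 d = 0 := by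
      intro i
      rw [hval i, if_neg (hK i)]
    rw [Finset.sum_congr rfl (fun i _ => by rw [hzero i, mul_zero])] at hfun
    simp at hfun
  obtain ⟨i₀, hi₀⟩ := hKne
  have hsum := GCPaux.sum_superchar S d
  rw [if_neg hd1, Finset.sum_congr rfl (fun i _ => hval i)] at hsum
  have hre := congrArg Complex.re hsum
  rw [Complex.re_sum] at hre
  simp only [apply_ite Complex.re, Complex.zero_re] at hre
  have hpos : (0 : ℝ) < ∑ i : {X // X ∈ S.parts},
      if S.derived ≤ charKer (S.superchar i.1) then (S.superchar i.1 1).re else 0 := by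
    apply Finset.sum_pos'
    · intro i _
      by_cases hle : S.derived ≤ charKer (S.superchar i.1)
      · rw [if_pos hle]
        exact (GCPaux.re_superchar_one_pos S i.2).le
      · rw [if_neg hle]
    · exact ⟨i₀, Finset.mem_univ i₀, by
        rw [if_pos hi₀]; exact GCPaux.re_superchar_one_pos S i₀.2⟩
  rw [hre] at hpos
  exact lt_irrefl 0 hpos
end

section
/- Let G be a finite group with supercharacter theory S. Then G is S-abelian if and only if (G,1) is an S-GCP. -/
open scoped BigOperators Pointwise

variable {G : Type} [Group G] [Fintype G]

open scoped Classical

private lemma orth_aux (V W : FDRep ℂ G) [CategoryTheory.Simple V] [CategoryTheory.Simple W] :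
    ∑ g : G, V.character g * W.character g⁻¹ =
      if Nonempty (V ≅ W) then (Fintype.card G : ℂ) else 0 := by
  have hc : ((Nat.card G : ℂ)) ≠ 0 := by
    exact_mod_cast Nat.card_pos.ne'
  letI hI : Invertible ((Nat.card G : ℂ)) := invertibleOfNonzero hc
  have h := FDRep.char_orthonormal (k := ℂ) (G := G) V W
  have h2 := congrArg (fun x => ((Nat.card G : ℂ)) * x) h
  simp only [smul_eq_mul, ← mul_assoc, mul_inv_cancel₀ hc, one_mul, mul_ite, mul_one, mul_zero] at h2
  rw [← Nat.card_eq_fintype_card]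
  exact h2

private lemma irr_pair {f f' : G → ℂ} (hf : IsIrrChar G f) (hf' : IsIrrChar G f') :
    ∑ g : G, f g * f' g⁻¹ = if f = f' then (Fintype.card G : ℂ) else 0 := by
  obtain ⟨V, hV, rfl⟩ := hf
  obtain ⟨W, hW, rfl⟩ := hf'
  have horth := orth_aux V W
  rw [horth]
  by_cases h : Nonempty (V ≅ W)
  · rw [if_pos h, if_pos (FDRep.char_iso h.some)]
  · rw [if_neg h, if_neg]
    intro heq
    have h2 := orth_aux V V
    rw [if_pos ⟨CategoryTheory.Iso.refl V⟩] at h2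
    rw [← heq] at horth
    rw [if_neg h] at horth
    rw [horth] at h2
    have : (Fintype.card G : ℂ) ≠ 0 := by exact_mod_cast Fintype.card_ne_zero
    exact this h2.symm

private lemma irr_deg {f : G → ℂ} (hf : IsIrrChar G f) : ∃ d : ℕ, 0 < d ∧ f 1 = d := by
  obtain ⟨V, hV, rfl⟩ := hf
  haveI := hV
  refine ⟨Module.finrank ℂ V, ?_, by rw [FDRep.char_one]⟩
  rw [Nat.pos_iff_ne_zero]
  intro h0
  haveI : Subsingleton V := Module.finrank_zero_iff.mp h0
  have hz : V.character = 0 := by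
    funext g
    show LinearMap.trace ℂ V (V.ρ g) = 0
    rw [Subsingleton.elim (V.ρ g) 0, map_zero]
  have h2 := irr_pair (f := V.character) (f' := V.character) ⟨V, hV, rfl⟩ ⟨V, hV, rfl⟩
  rw [if_pos rfl, hz] at h2
  simp only [Pi.zero_apply, zero_mul, Finset.sum_const_zero] at h2
  have : (Fintype.card G : ℂ) ≠ 0 := by exact_mod_cast Fintype.card_ne_zero
  exact this h2.symm

namespace SCT

private lemma superchar_apply (S : SCT G) (X : Finset (G → ℂ)) (g : G) :
    S.superchar X g = ∑ χ ∈ X, χ 1 * χ g := rfl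

private lemma superchar_const (S : SCT G) {X : Finset (G → ℂ)} (hX : X ∈ S.parts) {g h : G}
    (hh : h ∈ S.cls g) : S.superchar X h = S.superchar X g := S.const X hX g h hh

private lemma superchar_one_ne (S : SCT G) {X : Finset (G → ℂ)} (hX : X ∈ S.parts) :
    S.superchar X 1 ≠ 0 := by
  have hd : ∀ χ : {χ // χ ∈ X}, ∃ d : ℕ, 0 < d ∧ χ.1 1 = d := fun χ =>
    irr_deg ((S.parts_cover χ.1).mpr ⟨X, hX, χ.2⟩)
  choose d hd0 hdv using hd
  have hval : S.superchar X 1 = ((∑ χ ∈ X.attach, d χ * d χ : ℕ) : ℂ) := by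
    rw [superchar_apply, ← Finset.sum_attach X (fun χ => χ 1 * χ 1)]
    push_cast
    exact Finset.sum_congr rfl fun χ _ => by rw [hdv χ]
  rw [hval]
  have hpos : 0 < ∑ χ ∈ X.attach, d χ * d χ :=
    Finset.sum_pos (fun χ _ => Nat.mul_pos (hd0 χ) (hd0 χ))
      (Finset.attach_nonempty_iff.mpr (S.parts_nonempty X hX))
  exact_mod_cast hpos.ne'

private lemma B_expand (S : SCT G) {X Y : Finset (G → ℂ)} (hX : X ∈ S.parts) (hY : Y ∈ S.parts) :
    ∑ g : G, S.superchar X g * S.superchar Y g⁻¹ =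
      ∑ χ ∈ X, ∑ ψ ∈ Y, (χ 1 * ψ 1) * (if χ = ψ then (Fintype.card G : ℂ) else 0) := by
  have step1 : ∀ g : G, S.superchar X g * S.superchar Y g⁻¹ =
      ∑ χ ∈ X, ∑ ψ ∈ Y, (χ 1 * ψ 1) * (χ g * ψ g⁻¹) := by
    intro g
    rw [superchar_apply, superchar_apply, Finset.sum_mul_sum]
    exact Finset.sum_congr rfl fun χ _ => Finset.sum_congr rfl fun ψ _ => by ring
  rw [Finset.sum_congr rfl fun g _ => step1 g, Finset.sum_comm]
  refine Finset.sum_congr rfl fun χ hχ => ?_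
  rw [Finset.sum_comm]
  refine Finset.sum_congr rfl fun ψ hψ => ?_
  rw [← Finset.mul_sum,
    irr_pair ((S.parts_cover χ).mpr ⟨X, hX, hχ⟩) ((S.parts_cover ψ).mpr ⟨Y, hY, hψ⟩)]

private lemma B_ne (S : SCT G) {X Y : Finset (G → ℂ)} (hX : X ∈ S.parts) (hY : Y ∈ S.parts)
    (hne : X ≠ Y) : ∑ g : G, S.superchar X g * S.superchar Y g⁻¹ = 0 := by
  rw [B_expand S hX hY]
  refine Finset.sum_eq_zero fun χ hχ => Finset.sum_eq_zero fun ψ hψ => ?_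
  rw [if_neg, mul_zero]
  intro h
  exact Finset.disjoint_left.mp (S.parts_disj X hX Y hY hne) hχ (h ▸ hψ)

private lemma B_self (S : SCT G) {X : Finset (G → ℂ)} (hX : X ∈ S.parts) :
    ∑ g : G, S.superchar X g * S.superchar X g⁻¹ = (Fintype.card G : ℂ) * S.superchar X 1 := by
  rw [B_expand S hX hX, superchar_apply]
  rw [Finset.mul_sum]
  refine Finset.sum_congr rfl fun χ hχ => ?_
  rw [Finset.sum_eq_single χ]
  · rw [if_pos rfl]; ring
  · intro ψ hψ hne
    rw [if_neg (fun h => hne h.symm), mul_zero]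
  · intro h; exact absurd hχ h

end SCT

private lemma isNormal_bot (S : SCT G) : S.IsNormal ⊥ := by
  intro g hg
  have hg1 : g = 1 := by simpa [Subgroup.mem_bot] using hg
  subst hg1
  rw [S.cls_one]
  intro x hx
  simp only [Set.mem_singleton_iff] at hx
  subst hx
  exact Subgroup.one_mem _

/-- `G` is `S`-abelian iff `(G,1)` is an `S`-GCP. -/
theorem sAbelian_iff_isGCP_bot (S : SCT G) :
    S.centerSet = Set.univ ↔ S.IsGCP ⊥ := by
  constructor
  · intro h
    have hcls : ∀ g : G, S.cls g = {g} := fun g => (h ▸ Set.mem_univ g : g ∈ S.centerSet)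
    have hder : S.derived = ⊥ := by
      refine le_antisymm ((Subgroup.closure_le _).mpr ?_) bot_le
      rintro x ⟨g, -, k, hk, rfl⟩
      rw [hcls g] at hk
      simp only [Set.mem_singleton_iff] at hk
      subst hk
      simp [Subgroup.mem_bot]
    exact ⟨isNormal_bot S, fun g _ f hf => absurd (hder ▸ bot_le) hf.2⟩
  · rintro ⟨-, hcam⟩
    have hder : S.derived = ⊥ := by
      by_contra hd
      obtain ⟨⟨z, hz⟩, hz1⟩ := Subgroup.ne_bot_iff_exists_ne_one.mp hd
      have hzne : z ≠ 1 := by simpa [Subtype.ext_iff] using hz1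
      have hclsz : S.cls z ≠ S.cls 1 := by
        intro hE
        rw [S.cls_one] at hE
        have hmz := S.mem_cls z
        rw [hE] at hmz
        exact hzne hmz
      by_cases hcase : ∃ X ∈ S.parts, ¬ S.derived ≤ charKer (S.superchar X)
      · obtain ⟨X, hX, hker⟩ := hcase
        have hvan : ∀ g : G, g ≠ 1 → S.superchar X g = 0 := fun g hg =>
          hcam g (by simpa [Subgroup.mem_bot] using hg) _ ⟨⟨X, hX, rfl⟩, hker⟩
        have hcard2 : 1 < S.parts.card := by
          classical
          letI : Fintype (Set.range S.cls) := Fintype.ofFinite _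
          rw [S.card_eq, Nat.card_eq_fintype_card, Fintype.one_lt_card_iff_nontrivial]
          exact ⟨⟨S.cls z, Set.mem_range_self z⟩, ⟨S.cls 1, Set.mem_range_self 1⟩,
            by simpa [Subtype.ext_iff] using hclsz⟩
        obtain ⟨Y, hY, hYX⟩ := Finset.exists_mem_ne hcard2 X
        have h0 := SCT.B_ne S hX hY (fun hE => hYX hE.symm)
        rw [Finset.sum_eq_single 1] at h0
        · rw [inv_one] at h0
          exact mul_ne_zero (SCT.superchar_one_ne S hX) (SCT.superchar_one_ne S hY) h0
        · intro g _ hg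
          rw [hvan g hg, zero_mul]
        · intro hE
          exact absurd (Finset.mem_univ 1) hE
      · push_neg at hcase
        have hzfix : ∀ X ∈ S.parts, S.superchar X z = S.superchar X 1 := by
          intro X hX
          have h1 : ∀ h : G, S.superchar X (z * h) = S.superchar X h := hcase X hX hz
          simpa using h1 1
        classical
        letI : Fintype (Set.range S.cls) := Fintype.ofFinite _
        let rep : Set.range S.cls → G := fun t => t.2.choose
        have hrep : ∀ t : Set.range S.cls, S.cls (rep t) = t.1 := fun t => t.2.choose_spec
        have hrepmem : ∀ t : Set.range S.cls, (rep t) ∈ (t.1 : Set G) := fun t => by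
          have hm := S.mem_cls (rep t)
          rwa [hrep t] at hm
        let v : {X // X ∈ S.parts} → (Set.range S.cls → ℂ) := fun X t => S.superchar X.1 (rep t)
        have hli : LinearIndependent ℂ v := by
          rw [Fintype.linearIndependent_iff]
          intro c hc Y
          have hfun : ∀ g : G, (∑ X : {X // X ∈ S.parts}, c X * S.superchar X.1 g) = 0 := by
            intro g
            have h1 := congrFun hc ⟨S.cls g, Set.mem_range_self g⟩
            simp only [Finset.sum_apply, Pi.smul_apply, smul_eq_mul, Pi.zero_apply] at h1
            refine Eq.trans ?_ h1
            refine Finset.sum_congr rfl fun X _ => ?_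
            show c X * S.superchar X.1 g = c X * S.superchar X.1 (rep ⟨S.cls g, Set.mem_range_self g⟩)
            rw [SCT.superchar_const S X.2 (hrepmem ⟨S.cls g, Set.mem_range_self g⟩)]
          have h3 : (∑ X : {X // X ∈ S.parts},
              c X * ∑ g : G, S.superchar X.1 g * S.superchar Y.1 g⁻¹) = 0 := by
            calc (∑ X : {X // X ∈ S.parts}, c X * ∑ g : G, S.superchar X.1 g * S.superchar Y.1 g⁻¹)
                = ∑ X : {X // X ∈ S.parts}, ∑ g : G,
                    (c X * S.superchar X.1 g) * S.superchar Y.1 g⁻¹ := by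
                  refine Finset.sum_congr rfl fun X _ => ?_
                  rw [Finset.mul_sum]
                  exact Finset.sum_congr rfl fun g _ => by ring
              _ = ∑ g : G, ∑ X : {X // X ∈ S.parts},
                    (c X * S.superchar X.1 g) * S.superchar Y.1 g⁻¹ := Finset.sum_comm
              _ = ∑ g : G, (∑ X : {X // X ∈ S.parts}, c X * S.superchar X.1 g)
                    * S.superchar Y.1 g⁻¹ := by
                  exact Finset.sum_congr rfl fun g _ => (Finset.sum_mul _ _ _).symm
              _ = 0 := Finset.sum_eq_zero fun g _ => by rw [hfun g, zero_mul]
          rw [Finset.sum_eq_single Y] at h3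
          · rw [SCT.B_self S Y.2] at h3
            have hne1 : (Fintype.card G : ℂ) * S.superchar Y.1 1 ≠ 0 :=
              mul_ne_zero (by exact_mod_cast Fintype.card_ne_zero) (SCT.superchar_one_ne S Y.2)
            exact (mul_eq_zero.mp h3).resolve_right hne1
          · intro X _ hXY
            rw [SCT.B_ne S X.2 Y.2 (fun hE => hXY (Subtype.ext hE)), mul_zero]
          · intro hE
            exact absurd (Finset.mem_univ Y) hE
        let tz : Set.range S.cls := ⟨S.cls z, Set.mem_range_self z⟩
        let t1 : Set.range S.cls := ⟨S.cls 1, Set.mem_range_self 1⟩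
        have htzt1 : tz ≠ t1 := fun hE => hclsz (congrArg Subtype.val hE)
        let φ : (Set.range S.cls → ℂ) →ₗ[ℂ] ℂ :=
          (LinearMap.proj (R := ℂ) (φ := fun _ => ℂ) tz) -
            (LinearMap.proj (R := ℂ) (φ := fun _ => ℂ) t1)
        have hmemker : ∀ X : {X // X ∈ S.parts}, v X ∈ LinearMap.ker φ := by
          intro X
          rw [LinearMap.mem_ker]
          have e1 : S.superchar X.1 (rep tz) = S.superchar X.1 z :=
            SCT.superchar_const S X.2 (hrepmem tz)
          have e2 : S.superchar X.1 (rep t1) = S.superchar X.1 1 :=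
            SCT.superchar_const S X.2 (hrepmem t1)
          show v X tz - v X t1 = 0
          show S.superchar X.1 (rep tz) - S.superchar X.1 (rep t1) = 0
          rw [e1, e2, hzfix X.1 X.2, sub_self]
        let u : {X // X ∈ S.parts} → LinearMap.ker φ := fun X => ⟨v X, hmemker X⟩
        have hliu : LinearIndependent ℂ u :=
          LinearIndependent.of_comp (LinearMap.ker φ).subtype hli
        have hbound := hliu.fintype_card_le_finrank
        have hsurj : Function.Surjective φ := by
          intro cc
          refine ⟨fun t => if t = tz then cc else 0, ?_⟩
          show (fun t => if t = tz then cc else 0) tz - (fun t => if t = tz then cc else 0) t1 = cc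
          show (if tz = tz then cc else 0) - (if t1 = tz then cc else 0) = cc
          rw [if_pos rfl, if_neg (Ne.symm htzt1), sub_zero]
        have hrank := LinearMap.finrank_range_add_finrank_ker φ
        rw [LinearMap.range_eq_top.mpr hsurj, finrank_top, Module.finrank_self,
          Module.finrank_pi] at hrank
        have hcards : Fintype.card {X // X ∈ S.parts} = Fintype.card (Set.range S.cls) := by
          rw [Fintype.card_coe, S.card_eq, Nat.card_eq_fintype_card]
        omega
    apply Set.eq_univ_of_forall
    intro g
    show S.cls g = {g}
    refine Set.eq_singleton_iff_unique_mem.mpr ⟨S.mem_cls g, ?_⟩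
    intro k hk
    have hmem : g⁻¹ * k ∈ S.derived :=
      Subgroup.subset_closure ⟨g, Subgroup.mem_top g, k, hk, rfl⟩
    rw [hder, Subgroup.mem_bot] at hmem
    exact (inv_mul_eq_one.mp hmem).symm
end
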